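/- arXiv:1201.5570 — 2 statements merged into one kernel-verified Lean document; each statement's English description precedes it below -/
import Mathlib

section
/- Let Q : ℂ → (0,∞) be locally integrable, z₀ ∈ ℂ, 0 < r₁ < r₂ < ∞. Set ‖Q‖₁(z₀,r) = ∫_{S(z₀,r)} Q |dz| (integral over the circle of radius r), I = ∫_{r₁}^{r₂} dr/‖Q‖₁(z₀,r), and η₀(r) = 1/(I·‖Q‖₁(z₀,r)). Then for every measurable η : (r₁,r₂) → [0,∞] with ∫_{r₁}^{r₂} η(r) dr = 1, one has I^{−1} = ∫_{r₁<|z−z₀|<r₂} Q(z) η₀(|z−z₀|)² dm(z) ≤ ∫_{r₁<|z−z₀|<r₂} Q(z) η(|z−z₀|)² dm(z). -/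
open MeasureTheory Filter Set Metric ENNReal
open scoped Real

private lemma polar_injOn {r₁ r₂ : ℝ} (h₁ : 0 < r₁) :
    Set.InjOn (polarCoord.symm) (Set.Ioo r₁ r₂ ×ˢ Set.Ioc 0 (2*π)) := by
  rintro ⟨r, θ⟩ ⟨hr, hθ⟩ ⟨r', θ'⟩ ⟨hr', hθ'⟩ h
  simp only [polarCoord_symm_apply, Prod.mk.injEq] at h
  simp only [mem_prod, mem_Ioo, mem_Ioc] at hr hθ hr' hθ'
  have hr0 : 0 < r := h₁.trans hr.1
  have hr'0 : 0 < r' := h₁.trans hr'.1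
  have habs : r = r' := by
    have : r^2 = r'^2 := by
      have := congrArg (fun x : ℝ => x^2) h.1
      have h2 := congrArg (fun x : ℝ => x^2) h.2
      nlinarith [Real.sin_sq_add_cos_sq θ, Real.sin_sq_add_cos_sq θ']
    nlinarith
  subst habs
  have hcos : Real.cos θ = Real.cos θ' := by
    have := h.1; field_simp at this; exact this
  have hsin : Real.sin θ = Real.sin θ' := by
    have := h.2; field_simp at this; exact this
  have hexp : Complex.exp (θ * Complex.I) = Complex.exp (θ' * Complex.I) := by
    rw [Complex.exp_mul_I, Complex.exp_mul_I]
    push_cast [← Complex.ofReal_cos, ← Complex.ofReal_sin, hcos, hsin]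
    ring
  obtain ⟨n, hn⟩ := Complex.exp_eq_exp_iff_exists_int.1 hexp
  have hre : (θ : ℝ) = θ' + n * (2 * π) := by
    have := congrArg Complex.im hn
    simpa using this
  have hn0 : n = 0 := by
    have hπ := Real.pi_pos
    have h1 : (-1 : ℝ) < (n : ℝ) := by nlinarith [hθ.1, hθ.2, hθ'.1, hθ'.2]
    have h2 : (n : ℝ) < 1 := by nlinarith [hθ.1, hθ.2, hθ'.1, hθ'.2]
    have h1' : (-1 : ℤ) < n := by exact_mod_cast h1
    have h2' : n < 1 := by exact_mod_cast h2
    omega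
  subst hn0
  simp only [Int.cast_zero, zero_mul, add_zero] at hre
  simp [hre]

private lemma polar_image {r₁ r₂ : ℝ} (h₁ : 0 < r₁) (z₀ : ℂ) :
    (fun p : ℝ × ℝ => z₀ + p.1 * Complex.exp (p.2 * Complex.I)) ''
      (Set.Ioo r₁ r₂ ×ˢ Set.Ioc 0 (2*π)) =
    {z : ℂ | r₁ < ‖z - z₀‖ ∧ ‖z - z₀‖ < r₂} := by
  ext z
  constructor
  · rintro ⟨⟨r, θ⟩, ⟨hr, hθ⟩, rfl⟩
    simp only [mem_prod, mem_Ioo, mem_Ioc] at hr hθ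
    have hr0 : 0 < r := h₁.trans hr.1
    have : ‖z₀ + r * Complex.exp (θ * Complex.I) - z₀‖ = r := by
      rw [add_sub_cancel_left, norm_mul, Complex.norm_exp_ofReal_mul_I, mul_one,
        Complex.norm_real, Real.norm_eq_abs, abs_of_pos hr0]
    simp only [mem_setOf_eq, this]; exact hr
  · rintro ⟨hz1, hz2⟩
    set w := z - z₀ with hw
    have hw0 : w ≠ 0 := by
      intro h; rw [h] at hz1; simp at hz1; linarith
    have hθmem : (if 0 < w.arg then w.arg else w.arg + 2*π) ∈ Set.Ioc 0 (2*π) := by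
      have h1 := Complex.neg_pi_lt_arg w
      have h2 := Complex.arg_le_pi w
      have hπ := Real.pi_pos
      split_ifs with h
      · exact ⟨h, by linarith⟩
      · push_neg at h; constructor <;> [linarith; linarith]
    refine ⟨(‖w‖, if 0 < w.arg then w.arg else w.arg + 2*π), ⟨⟨hz1, hz2⟩, hθmem⟩, ?_⟩
    have key : (‖w‖ : ℂ) * Complex.exp ((if 0 < w.arg then w.arg else w.arg + 2*π : ℝ) * Complex.I) = w := by
      split_ifs with h
      · exact Complex.norm_mul_exp_arg_mul_I w
      · rw [show ((w.arg + 2*π : ℝ) : ℂ) * Complex.I = w.arg * Complex.I + 2*π*Complex.I by push_cast; ring,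
          Complex.exp_add, Complex.exp_two_pi_mul_I, mul_one]
        exact Complex.norm_mul_exp_arg_mul_I w
    simp only [key]
    rw [hw]; ring

private lemma key_polar (z₀ : ℂ) {r₁ r₂ : ℝ} (h₁ : 0 < r₁)
    (himg : (fun p : ℝ × ℝ => z₀ + p.1 * Complex.exp (p.2 * Complex.I)) ''
      (Set.Ioo r₁ r₂ ×ˢ Set.Ioc 0 (2*π)) =
      {z : ℂ | r₁ < ‖z - z₀‖ ∧ ‖z - z₀‖ < r₂})
    (hinj : Set.InjOn (polarCoord.symm) (Set.Ioo r₁ r₂ ×ˢ Set.Ioc 0 (2*π)))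
    (g : ℂ → ℝ≥0∞) :
    ∫⁻ z in {z : ℂ | r₁ < ‖z - z₀‖ ∧ ‖z - z₀‖ < r₂}, g z ∂volume =
    ∫⁻ p in Set.Ioo r₁ r₂ ×ˢ Set.Ioc 0 (2*π),
      ENNReal.ofReal p.1 * g (z₀ + p.1 * Complex.exp (p.2 * Complex.I)) ∂volume := by
  set s := Set.Ioo r₁ r₂ ×ˢ Set.Ioc 0 (2*π) with hs
  set E : (ℝ × ℝ) ≃ᵐ ℂ :=
    Complex.measurableEquivRealProd.symm.trans (Homeomorph.addLeft z₀).toMeasurableEquiv with hE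
  have hEapp : ∀ x : ℝ × ℝ, E x = z₀ + (x.1 + x.2 * Complex.I) := by
    intro x
    simp [hE, Complex.measurableEquivRealProd_symm_apply, Complex.mk_eq_add_mul_I]
  have hEf : ∀ p : ℝ × ℝ, E (polarCoord.symm p) = z₀ + p.1 * Complex.exp (p.2 * Complex.I) := by
    intro p
    rw [hEapp, polarCoord_symm_apply, Complex.exp_mul_I]
    push_cast [← Complex.ofReal_cos, ← Complex.ofReal_sin]
    ring
  have hEmp : MeasurePreserving E volume volume := by
    have h1 : MeasurePreserving (Complex.measurableEquivRealProd.symm) volume volume :=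
      Complex.volume_preserving_equiv_real_prod.symm Complex.measurableEquivRealProd
    have h2 : MeasurePreserving (fun w : ℂ => z₀ + w) volume volume :=
      measurePreserving_add_left volume z₀
    exact h2.comp h1
  -- derivative data
  set B : ℝ × ℝ → ℝ × ℝ →L[ℝ] ℝ × ℝ := fun p =>
    LinearMap.toContinuousLinearMap (Matrix.toLin (Module.Basis.finTwoProd ℝ) (Module.Basis.finTwoProd ℝ)
      !![Real.cos p.2, -p.1 * Real.sin p.2; Real.sin p.2, p.1 * Real.cos p.2]) with hB
  have hBdet : ∀ p : ℝ × ℝ, (B p).det = p.1 := by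
    intro p
    conv_rhs => rw [← one_mul p.1, ← Real.cos_sq_add_sin_sq p.2]
    simp only [hB, neg_mul, LinearMap.det_toContinuousLinearMap, LinearMap.det_toLin,
      Matrix.det_fin_two_of, sub_neg_eq_add]
    ring
  have hfderiv : ∀ p ∈ s, HasFDerivWithinAt (polarCoord.symm) (B p) s p := fun p _ =>
    (hasFDerivAt_polarCoord_symm p).hasFDerivWithinAt
  have hsm : MeasurableSet s := measurableSet_Ioo.prod measurableSet_Ioc
  calc
    ∫⁻ z in {z : ℂ | r₁ < ‖z - z₀‖ ∧ ‖z - z₀‖ < r₂}, g z ∂volume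
        = ∫⁻ z in E '' (polarCoord.symm '' s), g z ∂volume := by
          have : E '' (polarCoord.symm '' s) =
              {z : ℂ | r₁ < ‖z - z₀‖ ∧ ‖z - z₀‖ < r₂} := by
            rw [← image_comp, ← himg]
            exact image_congr fun p _ => hEf p
          rw [this]
    _ = ∫⁻ x in polarCoord.symm '' s, g (E x) ∂volume :=
          (hEmp.setLIntegral_comp_emb E.measurableEmbedding _ _).symm
    _ = ∫⁻ p in s, ENNReal.ofReal |(B p).det| * g (E (polarCoord.symm p)) ∂volume :=
          lintegral_image_eq_lintegral_abs_det_fderiv_mul volume hsm hfderiv hinj _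
    _ = ∫⁻ p in s, ENNReal.ofReal p.1 * g (z₀ + p.1 * Complex.exp (p.2 * Complex.I)) ∂volume := by
          apply setLIntegral_congr_fun hsm
          intro p hp
          dsimp only
          rw [hBdet, hEf, abs_of_pos (h₁.trans hp.1.1)]

private lemma fubini_polar {r₁ r₂ : ℝ} (F : ℝ × ℝ → ℝ≥0∞) (hF : Measurable F) :
    ∫⁻ p in Set.Ioo r₁ r₂ ×ˢ Set.Ioc 0 (2*π), F p ∂volume =
    ∫⁻ r in Set.Ioo r₁ r₂, ∫⁻ θ in Set.Ioc 0 (2*π), F (r, θ) ∂volume ∂volume := by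
  rw [Measure.volume_eq_prod, ← Measure.prod_restrict, lintegral_prod _ hF.aemeasurable]

private lemma holder_aux {α : Type*} [MeasurableSpace α] (μ : Measure α) (N η : α → ℝ≥0∞)
    (hN : Measurable N) (hη : Measurable η) (hN0 : ∀ᵐ x ∂μ, 0 < N x)
    (hnorm : ∫⁻ x, η x ∂μ = 1) :
    (∫⁻ x, (N x)⁻¹ ∂μ)⁻¹ ≤ ∫⁻ x, (η x) ^ 2 * N x ∂μ := by
  set I := ∫⁻ x, (N x)⁻¹ ∂μ with hI
  set M := ∫⁻ x, (η x) ^ 2 * N x ∂μ with hM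
  rcases eq_or_ne M ⊤ with hMtop | hMtop
  · rw [hMtop]; exact le_top
  have hmeas : Measurable fun x => (η x) ^ 2 * N x := (hη.pow_const 2).mul hN
  have hfin : ∀ᵐ x ∂μ, (η x) ^ 2 * N x < ⊤ := ae_lt_top hmeas hMtop
  -- f * g = η a.e.
  set f : α → ℝ≥0∞ := fun x => η x * (N x) ^ ((1:ℝ)/2) with hf
  set g : α → ℝ≥0∞ := fun x => (N x) ^ (-((1:ℝ)/2)) with hg
  have hfg : ∀ᵐ x ∂μ, f x * g x = η x := by
    filter_upwards [hfin, hN0] with x hx hx0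
    rcases eq_or_ne (N x) ⊤ with hNx | hNx
    · have hη0 : η x = 0 := by
        by_contra h
        rw [hNx, ENNReal.mul_top (pow_ne_zero 2 h)] at hx
        exact absurd hx (lt_irrefl _)
      simp [hf, hg, hη0]
    · have : (N x) ^ ((1:ℝ)/2) * (N x) ^ (-((1:ℝ)/2)) = 1 := by
        rw [← ENNReal.rpow_add _ _ hx0.ne' hNx]
        norm_num
      simp only [hf, hg, mul_assoc, this, mul_one]
  have hconj : Real.HolderConjugate 2 2 := Real.HolderConjugate.two_two
  have hNr : ∀ c : ℝ, Measurable fun x => N x ^ c := fun c =>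
    (ENNReal.continuous_rpow_const.measurable).comp hN
  have hHolder := ENNReal.lintegral_mul_le_Lp_mul_Lq μ hconj (f := f) (g := g)
    ((hη.mul (hNr _)).aemeasurable) ((hNr _).aemeasurable)
  have hf2 : ∀ x, f x ^ (2:ℝ) = (η x) ^ 2 * N x := by
    intro x
    rw [hf]
    rw [ENNReal.mul_rpow_of_nonneg _ _ (by norm_num : (0:ℝ) ≤ 2), ← ENNReal.rpow_natCast (η x) 2,
      ← ENNReal.rpow_mul]
    norm_num
  have hg2 : ∀ x, g x ^ (2:ℝ) = (N x)⁻¹ := by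
    intro x
    rw [hg, ← ENNReal.rpow_mul]
    norm_num
    rw [ENNReal.rpow_neg_one]
  have h1 : (1:ℝ≥0∞) ≤ M ^ ((1:ℝ)/2) * I ^ ((1:ℝ)/2) := by
    calc (1:ℝ≥0∞) = ∫⁻ x, η x ∂μ := hnorm.symm
    _ = ∫⁻ x, (f * g) x ∂μ := lintegral_congr_ae (hfg.mono fun x hx => hx.symm)
    _ ≤ (∫⁻ x, f x ^ (2:ℝ) ∂μ) ^ ((1:ℝ)/2) * (∫⁻ x, g x ^ (2:ℝ) ∂μ) ^ ((1:ℝ)/2) := hHolder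
    _ = M ^ ((1:ℝ)/2) * I ^ ((1:ℝ)/2) := by
        rw [hM, hI]
        congr 1
        · congr 1; exact lintegral_congr fun x => hf2 x
        · congr 1; exact lintegral_congr fun x => hg2 x
  rcases eq_or_ne I ⊤ with hItop | hItop
  · rw [hItop]; simp
  have hI0 : I ≠ 0 := by
    intro h
    rw [h, ENNReal.zero_rpow_of_pos (by norm_num)] at h1
    rw [mul_zero] at h1
    exact absurd h1 (by simp)
  have hMI : (1:ℝ≥0∞) ≤ M * I := by
    have := ENNReal.rpow_le_rpow h1 (by norm_num : (0:ℝ) ≤ 2)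
    rw [ENNReal.one_rpow, ENNReal.mul_rpow_of_nonneg _ _ (by norm_num : (0:ℝ) ≤ 2),
      ← ENNReal.rpow_mul, ← ENNReal.rpow_mul] at this
    norm_num at this
    simpa [ENNReal.rpow_one] using this
  calc I⁻¹ = I⁻¹ * 1 := (mul_one _).symm
  _ ≤ I⁻¹ * (M * I) := mul_le_mul_right hMI _
  _ = M * (I⁻¹ * I) := by ring
  _ = M := by rw [ENNReal.inv_mul_cancel hI0 hItop, mul_one]


/-- The arclength integral `‖Q‖₁(z₀,r) = ∫_{S(z₀,r)} Q |dz|` of a nonnegative function over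
the circle of radius `r` centered at `z₀`, computed via the parametrization
`θ ↦ z₀ + r e^{iθ}`. -/
noncomputable def circleL1 (Q : ℂ → ℝ) (z₀ : ℂ) (r : ℝ) : ℝ≥0∞ :=
  ∫⁻ θ in Set.Ioc (0 : ℝ) (2 * Real.pi),
    ENNReal.ofReal (Q (z₀ + r * Complex.exp (θ * Complex.I)) * r)

/-- Lemma 4.3: for locally integrable `Q : ℂ → (0,∞)`, `0 < r₁ < r₂ < ∞`, with
`I = ∫_{r₁}^{r₂} dr/‖Q‖₁(z₀,r)` and `η₀(r) = 1/(I·‖Q‖₁(z₀,r))`, one has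
`I⁻¹ = ∫_{r₁<|z−z₀|<r₂} Q(z) η₀(|z−z₀|)² dm(z) ≤ ∫_{r₁<|z−z₀|<r₂} Q(z) η(|z−z₀|)² dm(z)`
for every measurable `η : (r₁,r₂) → [0,∞]` with `∫_{r₁}^{r₂} η(r) dr = 1`. -/
theorem ring_lower_estimate
    (Q : ℂ → ℝ) (hQl : LocallyIntegrable Q volume) (hQpos : ∀ z, 0 < Q z)
    (z₀ : ℂ) (r₁ r₂ : ℝ) (h₁ : 0 < r₁) (h₁₂ : r₁ < r₂) :
    (∫⁻ z in {z : ℂ | r₁ < ‖z - z₀‖ ∧ ‖z - z₀‖ < r₂},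
        ENNReal.ofReal (Q z) *
          (((∫⁻ r in Set.Ioo r₁ r₂, (circleL1 Q z₀ r)⁻¹) *
            circleL1 Q z₀ (‖z - z₀‖))⁻¹) ^ 2 ∂volume) =
      (∫⁻ r in Set.Ioo r₁ r₂, (circleL1 Q z₀ r)⁻¹)⁻¹ ∧
    ∀ η : ℝ → ℝ≥0∞, Measurable η → (∫⁻ r in Set.Ioo r₁ r₂, η r) = 1 →
      (∫⁻ r in Set.Ioo r₁ r₂, (circleL1 Q z₀ r)⁻¹)⁻¹ ≤
        ∫⁻ z in {z : ℂ | r₁ < ‖z - z₀‖ ∧ ‖z - z₀‖ < r₂},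
          ENNReal.ofReal (Q z) * (η (‖z - z₀‖)) ^ 2 ∂volume := by
  classical
  have hπ := Real.pi_pos
  set A : Set ℂ := {z : ℂ | r₁ < ‖z - z₀‖ ∧ ‖z - z₀‖ < r₂} with hA
  have hAm : MeasurableSet A := by
    apply MeasurableSet.inter
    · exact measurableSet_lt measurable_const (continuous_norm.comp
        (continuous_id.sub continuous_const)).measurable
    · exact measurableSet_lt (continuous_norm.comp
        (continuous_id.sub continuous_const)).measurable measurable_const
  -- the polar map
  have hGm : Measurable fun p : ℝ × ℝ => z₀ + p.1 * Complex.exp (p.2 * Complex.I) := by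
    have : Continuous fun p : ℝ × ℝ => z₀ + p.1 * Complex.exp (p.2 * Complex.I) := by
      continuity
    exact this.measurable
  have habs : ∀ r : ℝ, 0 < r → ∀ θ : ℝ,
      ‖z₀ + r * Complex.exp (θ * Complex.I) - z₀‖ = r := by
    intro r hr θ
    rw [add_sub_cancel_left, norm_mul, Complex.norm_exp_ofReal_mul_I, mul_one,
      Complex.norm_real, Real.norm_eq_abs, abs_of_pos hr]
  have main : ∀ g : ℂ → ℝ≥0∞, Measurable g →
      ∫⁻ z in A, g z ∂volume =
      ∫⁻ r in Set.Ioo r₁ r₂, ∫⁻ θ in Set.Ioc 0 (2*π),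
        ENNReal.ofReal r * g (z₀ + r * Complex.exp (θ * Complex.I)) ∂volume ∂volume := by
    intro g hg
    rw [key_polar z₀ h₁ (polar_image h₁ z₀) (polar_injOn h₁) g]
    exact fubini_polar _ (((ENNReal.measurable_ofReal).comp measurable_fst).mul (hg.comp hGm))
  -- measurable positive a.e.-modification of Q
  obtain ⟨Q'', hQ''m, hQae⟩ := hQl.aestronglyMeasurable.aemeasurable
  set Nset : Set ℂ := toMeasurable volume {z | Q z ≠ Q'' z} with hNset
  have hNsm : MeasurableSet Nset := measurableSet_toMeasurable _ _
  have hNs0 : volume Nset = 0 := by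
    rw [hNset, measure_toMeasurable]
    exact hQae
  set Q' : ℂ → ℝ := fun z => if z ∈ Nset then 1 else Q z with hQ'
  have hQ'm : Measurable Q' := by
    have heq : Q' = fun z => if z ∈ Nset then 1 else Q'' z := by
      funext z
      by_cases h : z ∈ Nset
      · simp [hQ', h]
      · have : Q z = Q'' z := by
          by_contra hne
          exact h (subset_toMeasurable _ _ hne)
        simp [hQ', h, this]
    rw [heq]
    exact Measurable.ite hNsm measurable_const hQ''m
  have hQ'pos : ∀ z, 0 < Q' z := by
    intro z
    by_cases h : z ∈ Nset <;> simp [hQ', h, hQpos z]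
  have hQQ' : ∀ z, z ∉ Nset → Q z = Q' z := by
    intro z h; simp [hQ', h]
  have hQ'ae : ∀ᵐ z ∂volume, Q z = Q' z := by
    rw [ae_iff]
    refine measure_mono_null (fun z hz => ?_) hNs0
    by_contra h
    exact hz (hQQ' z h)
  set N : ℝ → ℝ≥0∞ := fun r => circleL1 Q' z₀ r with hN
  have hθm : ∀ r : ℝ, Measurable fun θ : ℝ =>
      ENNReal.ofReal (Q' (z₀ + r * Complex.exp (θ * Complex.I)) * r) := by
    intro r
    apply ENNReal.measurable_ofReal.comp
    apply Measurable.mul _ measurable_const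
    exact hQ'm.comp (hGm.comp (measurable_const.prodMk measurable_id))
  have hNm : Measurable N := by
    apply Measurable.lintegral_prod_right (f := fun (r θ : ℝ) =>
      ENNReal.ofReal (Q' (z₀ + r * Complex.exp (θ * Complex.I)) * r))
    apply ENNReal.measurable_ofReal.comp
    exact (hQ'm.comp hGm).mul measurable_fst
  have hNpos : ∀ r : ℝ, 0 < r → 0 < N r := by
    intro r hr
    rw [hN]
    unfold circleL1
    rw [lintegral_pos_iff_support (hθm r)]
    have hsupp : (Function.support fun θ : ℝ =>
        ENNReal.ofReal (Q' (z₀ + r * Complex.exp (θ * Complex.I)) * r)) = Set.univ := by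
      ext θ
      simp only [Function.mem_support, Set.mem_univ, iff_true]
      exact (ENNReal.ofReal_pos.2 (mul_pos (hQ'pos _) hr)).ne'
    rw [hsupp]
    simp only [Measure.restrict_apply_univ, Real.volume_Ioc]
    rw [ENNReal.ofReal_pos]
    linarith
  -- a.e. agreement of circleL1 Q and N
  have hcirc : ∀ᵐ r ∂(volume.restrict (Set.Ioo r₁ r₂)), circleL1 Q z₀ r = N r := by
    have hindm : Measurable fun z : ℂ => Nset.indicator (fun _ => (1:ℝ≥0∞)) z :=
      measurable_one.indicator hNsm
    have h0 : (∫⁻ r in Set.Ioo r₁ r₂, ∫⁻ θ in Set.Ioc 0 (2*π),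
        ENNReal.ofReal r * Nset.indicator (fun _ => (1:ℝ≥0∞))
          (z₀ + r * Complex.exp (θ * Complex.I)) ∂volume ∂volume) = 0 := by
      rw [← main _ hindm]
      have : (∫⁻ z in A, Nset.indicator (fun _ => (1:ℝ≥0∞)) z ∂volume) ≤
          ∫⁻ z, Nset.indicator (fun _ => (1:ℝ≥0∞)) z ∂volume :=
        setLIntegral_le_lintegral _ _
      have h2 : (∫⁻ z, Nset.indicator (fun _ => (1:ℝ≥0∞)) z ∂volume) = volume Nset :=
        lintegral_indicator_one hNsm
      exact le_antisymm ((this.trans_eq h2).trans hNs0.le) zero_le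
    have hinm : Measurable fun r : ℝ => ∫⁻ θ in Set.Ioc 0 (2*π),
        ENNReal.ofReal r * Nset.indicator (fun _ => (1:ℝ≥0∞))
          (z₀ + r * Complex.exp (θ * Complex.I)) ∂volume := by
      apply Measurable.lintegral_prod_right (f := fun (r θ : ℝ) =>
        ENNReal.ofReal r * Nset.indicator (fun _ => (1:ℝ≥0∞))
          (z₀ + r * Complex.exp (θ * Complex.I)))
      exact ((ENNReal.measurable_ofReal).comp measurable_fst).mul (hindm.comp hGm)
    have hae0 := (lintegral_eq_zero_iff hinm).1 h0
    filter_upwards [hae0, ae_restrict_mem measurableSet_Ioo] with r hr hrIoo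
    have hr0 : 0 < r := h₁.trans hrIoo.1
    have hθind : Measurable fun θ : ℝ => Nset.indicator (fun _ => (1:ℝ≥0∞))
        (z₀ + r * Complex.exp (θ * Complex.I)) :=
      hindm.comp (hGm.comp (measurable_const.prodMk measurable_id))
    rw [Pi.zero_apply, lintegral_const_mul _ hθind, mul_eq_zero] at hr
    have hint0 : (∫⁻ θ in Set.Ioc 0 (2*π), Nset.indicator (fun _ => (1:ℝ≥0∞))
        (z₀ + r * Complex.exp (θ * Complex.I)) ∂volume) = 0 := by
      rcases hr with hr | hr
      · exact absurd hr (by simp [ENNReal.ofReal_eq_zero]; linarith)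
      · exact hr
    have hθae := (lintegral_eq_zero_iff hθind).1 hint0
    rw [hN]
    unfold circleL1
    apply lintegral_congr_ae
    filter_upwards [hθae] with θ hθ
    have hnot : z₀ + r * Complex.exp (θ * Complex.I) ∉ Nset := by
      intro hmem
      simp [Set.indicator_of_mem hmem] at hθ
    rw [hQQ' _ hnot]
  have hIeq : (∫⁻ r in Set.Ioo r₁ r₂, (circleL1 Q z₀ r)⁻¹) =
      ∫⁻ r in Set.Ioo r₁ r₂, (N r)⁻¹ :=
    lintegral_congr_ae (hcirc.mono fun r h => by simp only [h])
  set I : ℝ≥0∞ := ∫⁻ r in Set.Ioo r₁ r₂, (N r)⁻¹ with hIdef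
  -- bad radii
  set T' : Set ℝ := toMeasurable (volume.restrict (Set.Ioo r₁ r₂))
      {r | circleL1 Q z₀ r ≠ N r} ∩ Set.Ioo r₁ r₂ with hT'
  have hT'm : MeasurableSet T' :=
    (measurableSet_toMeasurable _ _).inter measurableSet_Ioo
  have hT'0 : volume T' = 0 := by
    have h1 : volume.restrict (Set.Ioo r₁ r₂)
        (toMeasurable (volume.restrict (Set.Ioo r₁ r₂)) {r | circleL1 Q z₀ r ≠ N r}) = 0 := by
      rw [measure_toMeasurable]
      exact hcirc
    rwa [Measure.restrict_apply (measurableSet_toMeasurable _ _)] at h1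
  have hT'mem : ∀ r ∈ Set.Ioo r₁ r₂, circleL1 Q z₀ r ≠ N r → r ∈ T' := by
    intro r hr hne
    exact ⟨subset_toMeasurable _ _ hne, hr⟩
  -- a.e. z in A, the radius is good
  have hzgood : ∀ᵐ z ∂(volume.restrict A), ‖z - z₀‖ ∉ T' := by
    rw [ae_iff]
    have hSm : MeasurableSet {z : ℂ | ‖z - z₀‖ ∈ T'} :=
      (continuous_norm.comp (continuous_id.sub continuous_const)).measurable hT'm
    have hset : {a : ℂ | ¬‖a - z₀‖ ∉ T'} = {z : ℂ | ‖z - z₀‖ ∈ T'} := by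
      ext z; simp
    rw [hset]
    have hval : (volume.restrict A) {z : ℂ | ‖z - z₀‖ ∈ T'} =
        ∫⁻ z in A, {z : ℂ | ‖z - z₀‖ ∈ T'}.indicator (fun _ => (1:ℝ≥0∞)) z
          ∂volume := (lintegral_indicator_one hSm).symm
    rw [hval, main _ (measurable_const.indicator hSm)]
    have hcongr : ∀ᵐ r ∂(volume.restrict (Set.Ioo r₁ r₂)),
        (∫⁻ θ in Set.Ioc 0 (2*π), ENNReal.ofReal r *
          {z : ℂ | ‖z - z₀‖ ∈ T'}.indicator (fun _ => (1:ℝ≥0∞))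
            (z₀ + r * Complex.exp (θ * Complex.I)) ∂volume) = 0 := by
      have hT'ae : ∀ᵐ r ∂(volume.restrict (Set.Ioo r₁ r₂)), r ∉ T' := by
        apply ae_restrict_of_ae
        rw [ae_iff]
        simpa using hT'0
      filter_upwards [hT'ae, ae_restrict_mem measurableSet_Ioo] with r hrT hrIoo
      have hr0 : 0 < r := h₁.trans hrIoo.1
      have hzero : ∀ θ : ℝ, {z : ℂ | ‖z - z₀‖ ∈ T'}.indicator
          (fun _ => (1:ℝ≥0∞)) (z₀ + r * Complex.exp (θ * Complex.I)) = 0 := by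
        intro θ
        apply Set.indicator_of_notMem
        rw [Set.mem_setOf_eq, habs r hr0 θ]
        exact hrT
      simp [hzero]
    rw [lintegral_congr_ae hcongr, lintegral_zero]
  -- a.e. z in A, z not in Nset
  have hzQ : ∀ᵐ z ∂(volume.restrict A), Q z = Q' z := ae_restrict_of_ae hQ'ae
  -- rewrite statement integrals with Q', N
  rw [hIeq]
  constructor
  · -- equality part
    have hfirst : (∫⁻ z in A, ENNReal.ofReal (Q z) *
          ((I * circleL1 Q z₀ (‖z - z₀‖))⁻¹) ^ 2 ∂volume) =
        ∫⁻ z in A, ENNReal.ofReal (Q' z) *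
          ((I * N (‖z - z₀‖))⁻¹) ^ 2 ∂volume := by
      apply lintegral_congr_ae
      filter_upwards [ae_restrict_mem hAm, hzgood, hzQ] with z hzA hzT hQz
      have hceq : circleL1 Q z₀ (‖z - z₀‖) = N (‖z - z₀‖) := by
        by_contra hne
        exact hzT (hT'mem _ ⟨hzA.1, hzA.2⟩ hne)
      rw [hQz, hceq]
    rw [hfirst]
    have hgm : Measurable fun z : ℂ => ENNReal.ofReal (Q' z) *
        ((I * N (‖z - z₀‖))⁻¹) ^ 2 := by
      apply Measurable.mul
      · exact ENNReal.measurable_ofReal.comp hQ'm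
      · apply Measurable.pow_const
        apply Measurable.inv
        apply Measurable.const_mul
        exact hNm.comp (continuous_norm.comp
          (continuous_id.sub continuous_const)).measurable
    rw [main _ hgm]
    have hinner : ∀ᵐ r ∂(volume.restrict (Set.Ioo r₁ r₂)),
        (∫⁻ θ in Set.Ioc 0 (2*π), ENNReal.ofReal r * (ENNReal.ofReal
            (Q' (z₀ + r * Complex.exp (θ * Complex.I))) *
          ((I * N (‖z₀ + r * Complex.exp (θ * Complex.I) - z₀‖))⁻¹) ^ 2) ∂volume)
        = ((I * N r)⁻¹) ^ 2 * N r := by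
      filter_upwards [ae_restrict_mem measurableSet_Ioo] with r hrIoo
      have hr0 : 0 < r := h₁.trans hrIoo.1
      have habs' : ∀ θ : ℝ,
          ‖z₀ + r * Complex.exp (θ * Complex.I) - z₀‖ = r := habs r hr0
      calc (∫⁻ θ in Set.Ioc 0 (2*π), ENNReal.ofReal r * (ENNReal.ofReal
            (Q' (z₀ + r * Complex.exp (θ * Complex.I))) *
            ((I * N (‖z₀ + r * Complex.exp (θ * Complex.I) - z₀‖))⁻¹) ^ 2) ∂volume)
          = ∫⁻ θ in Set.Ioc 0 (2*π), ((I * N r)⁻¹) ^ 2 * ENNReal.ofReal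
              (Q' (z₀ + (r:ℂ) * Complex.exp ((θ:ℂ) * Complex.I)) * r) ∂volume := by
            apply lintegral_congr
            intro θ
            rw [habs', ENNReal.ofReal_mul (hQ'pos _).le]
            ring
      _ = ((I * N r)⁻¹) ^ 2 * N r := by
            rw [lintegral_const_mul _ (hθm r)]
            rfl
    rw [lintegral_congr_ae hinner]
    -- now evaluate ∫⁻ r in Ioo, ((I * N r)⁻¹)^2 * N r
    have hvol : volume (Set.Ioo r₁ r₂) ≠ 0 := by
      rw [Real.volume_Ioo]
      simp only [ne_eq, ENNReal.ofReal_eq_zero, not_le]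
      linarith
    rcases eq_or_ne I 0 with hI0 | hI0
    · -- I = 0 : N r = ∞ a.e., integrand = ∞ a.e.
      have hae : ∀ᵐ r ∂(volume.restrict (Set.Ioo r₁ r₂)), (N r)⁻¹ = 0 := by
        have h0' : (∫⁻ r in Set.Ioo r₁ r₂, (N r)⁻¹) = 0 := hIdef.symm.trans hI0
        have h1' := (lintegral_eq_zero_iff hNm.inv).1 h0'
        filter_upwards [h1'] with r hr
        simpa using hr
      have hcongr : ∀ᵐ r ∂(volume.restrict (Set.Ioo r₁ r₂)),
          ((I * N r)⁻¹) ^ 2 * N r = ⊤ := by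
        filter_upwards [hae] with r hr
        have hNtop : N r = ⊤ := ENNReal.inv_eq_zero.1 hr
        rw [hI0, hNtop]
        simp
      rw [lintegral_congr_ae hcongr, setLIntegral_const, hI0]
      rw [ENNReal.top_mul hvol, ENNReal.inv_zero]
    rcases eq_or_ne I ⊤ with hItop | hItop
    · -- I = ∞ : integrand = 0
      have hcongr : ∀ᵐ r ∂(volume.restrict (Set.Ioo r₁ r₂)),
          ((I * N r)⁻¹) ^ 2 * N r = 0 := by
        filter_upwards [ae_restrict_mem measurableSet_Ioo] with r hrIoo
        have hr0 : 0 < r := h₁.trans hrIoo.1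
        rw [hItop, ENNReal.top_mul (hNpos r hr0).ne']
        simp
      rw [lintegral_congr_ae hcongr, lintegral_zero, hItop]
      simp
    · -- 0 < I < ∞
      have hcongr : ∀ᵐ r ∂(volume.restrict (Set.Ioo r₁ r₂)),
          ((I * N r)⁻¹) ^ 2 * N r = I⁻¹ ^ 2 * (N r)⁻¹ := by
        filter_upwards [ae_restrict_mem measurableSet_Ioo] with r hrIoo
        have hr0 : 0 < r := h₁.trans hrIoo.1
        rcases eq_or_ne (N r) ⊤ with hNtop | hNtop
        · rw [hNtop, ENNReal.mul_top hI0]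
          simp
        · rw [ENNReal.mul_inv (Or.inl hI0) (Or.inl hItop), mul_pow, mul_assoc]
          congr 1
          rw [pow_two, mul_assoc, ENNReal.inv_mul_cancel (hNpos r hr0).ne' hNtop, mul_one]
      rw [lintegral_congr_ae hcongr, lintegral_const_mul (f := fun r => (N r)⁻¹) _ hNm.inv, ← hIdef]
      rw [pow_two, mul_assoc, ENNReal.inv_mul_cancel hI0 hItop, mul_one]
  · -- inequality part
    intro η hη hη1
    have hrhs : (∫⁻ z in A, ENNReal.ofReal (Q z) * (η (‖z - z₀‖)) ^ 2 ∂volume) =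
        ∫⁻ z in A, ENNReal.ofReal (Q' z) * (η (‖z - z₀‖)) ^ 2 ∂volume := by
      apply lintegral_congr_ae
      filter_upwards [hzQ] with z hz
      rw [hz]
    rw [hrhs]
    have hgm : Measurable fun z : ℂ => ENNReal.ofReal (Q' z) *
        (η (‖z - z₀‖)) ^ 2 := by
      apply Measurable.mul
      · exact ENNReal.measurable_ofReal.comp hQ'm
      · exact (hη.comp (continuous_norm.comp
          (continuous_id.sub continuous_const)).measurable).pow_const 2
    rw [main _ hgm]
    have hinner : ∀ᵐ r ∂(volume.restrict (Set.Ioo r₁ r₂)),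
        (∫⁻ θ in Set.Ioc 0 (2*π), ENNReal.ofReal r * (ENNReal.ofReal
            (Q' (z₀ + r * Complex.exp (θ * Complex.I))) *
          (η (‖z₀ + r * Complex.exp (θ * Complex.I) - z₀‖)) ^ 2) ∂volume)
        = (η r) ^ 2 * N r := by
      filter_upwards [ae_restrict_mem measurableSet_Ioo] with r hrIoo
      have hr0 : 0 < r := h₁.trans hrIoo.1
      calc (∫⁻ θ in Set.Ioc 0 (2*π), ENNReal.ofReal r * (ENNReal.ofReal
              (Q' (z₀ + r * Complex.exp (θ * Complex.I))) *
            (η (‖z₀ + r * Complex.exp (θ * Complex.I) - z₀‖)) ^ 2) ∂volume)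
          = ∫⁻ θ in Set.Ioc 0 (2*π), (η r) ^ 2 * ENNReal.ofReal
              (Q' (z₀ + (r:ℂ) * Complex.exp ((θ:ℂ) * Complex.I)) * r) ∂volume := by
            apply lintegral_congr
            intro θ
            rw [habs r hr0 θ, ENNReal.ofReal_mul (hQ'pos _).le]
            ring
      _ = (η r) ^ 2 * N r := by
            rw [lintegral_const_mul _ (hθm r)]
            rfl
    rw [lintegral_congr_ae hinner]
    exact holder_aux (volume.restrict (Set.Ioo r₁ r₂)) N η hNm hη
      ((ae_restrict_mem measurableSet_Ioo).mono fun r hr => hNpos r (h₁.trans hr.1)) hη1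
end

section
/- Let Φ : [0,∞] → [0,∞] be a non-decreasing convex function with ∫_{δ₀}^∞ dτ/(τ Φ^{−1}(τ)) = ∞ for some δ₀ > Φ(0), and let Q : 𝔻 → [0,∞] be measurable on the unit disk with ∫_𝔻 Φ(Q(z)) dm(z) < ∞. Then ∫_0^1 dr/(r q(r)) = ∞, where q(r) is the average of Q over the circle |z| = r. -/
open MeasureTheory Filter Set Metric ENNReal

section PhiAux
variable {Φ : ℝ → ℝ}

lemma phi_upper (hΦconv : ConvexOn ℝ (Set.Ici 0) Φ) {t : ℝ} (h0 : 0 ≤ t) (h1 : t ≤ 1) :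
    Φ t ≤ Φ 0 + t * (Φ 1 - Φ 0) := by
  have h := hΦconv.2 (Set.mem_Ici.2 (le_refl (0:ℝ))) (Set.mem_Ici.2 zero_le_one)
    (show (0:ℝ) ≤ 1 - t by linarith) h0 (show (1 - t) + t = 1 by ring)
  simp only [smul_eq_mul, mul_zero, mul_one, zero_add] at h
  nlinarith [h]

lemma phi_continuousOn (hΦmono : MonotoneOn Φ (Set.Ici 0))
    (hΦconv : ConvexOn ℝ (Set.Ici 0) Φ) : ContinuousOn Φ (Set.Ici 0) := by
  intro x hx
  rcases eq_or_lt_of_le (Set.mem_Ici.1 hx) with h | h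
  · -- x = 0
    subst h
    -- squeeze
    have hub : ∀ t ∈ Set.Icc (0:ℝ) 1, Φ t ≤ Φ 0 + t * (Φ 1 - Φ 0) := fun t ht =>
      phi_upper hΦconv ht.1 ht.2
    have hlb : ∀ t ∈ Set.Icc (0:ℝ) 1, Φ 0 ≤ Φ t := fun t ht =>
      hΦmono (Set.mem_Ici.2 (le_refl (0:ℝ))) (Set.mem_Ici.2 ht.1) ht.1
    have hev : ∀ᶠ t in nhdsWithin 0 (Set.Ici 0), t ∈ Set.Icc (0:ℝ) 1 := by
      filter_upwards [Filter.inter_mem (nhdsWithin_le_nhds (Icc_mem_nhds (by norm_num)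
          (by norm_num : (0:ℝ) < 1) : Set.Icc (-1:ℝ) 1 ∈ nhds 0)) self_mem_nhdsWithin]
        with t ht
      exact ⟨ht.2, ht.1.2⟩
    have h1 : Filter.Tendsto (fun _ : ℝ => Φ 0) (nhdsWithin 0 (Set.Ici 0)) (nhds (Φ 0)) :=
      tendsto_const_nhds
    have h2 : Filter.Tendsto (fun t : ℝ => Φ 0 + t * (Φ 1 - Φ 0)) (nhdsWithin 0 (Set.Ici 0))
        (nhds (Φ 0)) := by
      have : Filter.Tendsto (fun t : ℝ => Φ 0 + t * (Φ 1 - Φ 0)) (nhds 0) (nhds (Φ 0 + 0 * (Φ 1 - Φ 0))) := by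
        exact Filter.Tendsto.add tendsto_const_nhds (Filter.Tendsto.mul_const _ tendsto_id)
      simpa using this.mono_left nhdsWithin_le_nhds
    refine tendsto_of_tendsto_of_tendsto_of_le_of_le' h1 h2 ?_ ?_
    · filter_upwards [hev] with t ht using hlb t ht
    · filter_upwards [hev] with t ht using hub t ht
  · -- x > 0
    have hco : ContinuousOn Φ (interior (Set.Ici (0:ℝ))) := hΦconv.continuousOn_interior
    rw [interior_Ici] at hco
    exact ((hco.continuousAt (isOpen_Ioi.mem_nhds h)).continuousWithinAt)

lemma phi_small (hΦconv : ConvexOn ℝ (Set.Ici 0) Φ) {δ₀ : ℝ} (hδ₀ : Φ 0 < δ₀) :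
    ∃ ε > 0, ∀ t, 0 ≤ t → t ≤ ε → Φ t < δ₀ := by
  set C := |Φ 1 - Φ 0| + 1 with hC
  have hCpos : 0 < C := by positivity
  refine ⟨min 1 ((δ₀ - Φ 0) / (2 * C)), lt_min one_pos (div_pos (by linarith) (by positivity)), fun t ht htle => ?_⟩
  have h1 : t ≤ 1 := htle.trans (min_le_left _ _)
  have h2 : t ≤ (δ₀ - Φ 0) / (2 * C) := htle.trans (min_le_right _ _)
  have h3 : Φ t ≤ Φ 0 + t * (Φ 1 - Φ 0) := phi_upper hΦconv ht h1
  have h4 : t * (Φ 1 - Φ 0) ≤ t * C := by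
    apply mul_le_mul_of_nonneg_left _ ht
    rw [hC]; exact (le_abs_self _).trans (by linarith [abs_nonneg (Φ 1 - Φ 0)])
  have h5 : t * C ≤ (δ₀ - Φ 0) / (2 * C) * C := mul_le_mul_of_nonneg_right h2 hCpos.le
  have h6 : (δ₀ - Φ 0) / (2 * C) * C = (δ₀ - Φ 0) / 2 := by field_simp
  nlinarith [h3,h4,h5,h6,hδ₀,hCpos]

end PhiAux

section InvAux
variable {Φ : ℝ → ℝ} {δ₀ : ℝ}

/-- helper: bound a set-lintegral by a constant -/
lemma my_setLIntegral_le_const {s : Set ℝ} (hs : MeasurableSet s) (f : ℝ → ℝ≥0∞) (c : ℝ≥0∞)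
    (h : ∀ x ∈ s, f x ≤ c) : ∫⁻ x in s, f x ≤ c * volume s := by
  calc ∫⁻ x in s, f x ≤ ∫⁻ _ in s, c := by
        refine lintegral_mono_ae ?_
        exact (ae_restrict_iff' hs).2 (Filter.Eventually.of_forall h)
    _ = c * volume s := setLIntegral_const s c

lemma my_setLIntegral_const_le {s : Set ℝ} (hs : MeasurableSet s) (f : ℝ → ℝ≥0∞) (c : ℝ≥0∞)
    (h : ∀ x ∈ s, c ≤ f x) : c * volume s ≤ ∫⁻ x in s, f x := by
  calc c * volume s = ∫⁻ _ in s, c := (setLIntegral_const s c).symm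
    _ ≤ ∫⁻ x in s, f x := lintegral_mono_ae ((ae_restrict_iff' hs).2 (Filter.Eventually.of_forall h))

lemma inv_mem_lb (hΦconv : ConvexOn ℝ (Set.Ici 0) Φ) (hδ₀ : Φ 0 < δ₀) :
    ∃ ε > 0, ∀ τ, δ₀ ≤ τ → ∀ t ∈ {t : ℝ | 0 ≤ t ∧ τ ≤ Φ t}, ε ≤ t := by
  obtain ⟨ε, hε, hsm⟩ := phi_small hΦconv hδ₀
  refine ⟨ε, hε, fun τ hτ t ht => ?_⟩
  by_contra hlt
  push_neg at hlt
  exact absurd (lt_of_lt_of_le (hsm t ht.1 hlt.le) (hτ.trans ht.2)) (not_lt.2 le_rfl)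

lemma kernel_le (hΦ0 : ∀ t, 0 ≤ t → 0 ≤ Φ t) (hΦconv : ConvexOn ℝ (Set.Ici 0) Φ)
    (hδ₀ : Φ 0 < δ₀) :
    ∃ ε > 0, ∀ τ, δ₀ ≤ τ →
      ENNReal.ofReal (1 / (τ * sInf {t : ℝ | 0 ≤ t ∧ τ ≤ Φ t})) ≤ ENNReal.ofReal (1 / (δ₀ * ε)) := by
  obtain ⟨ε, hε, hlb⟩ := inv_mem_lb hΦconv hδ₀
  have hδpos : 0 < δ₀ := lt_of_le_of_lt (hΦ0 0 le_rfl) hδ₀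
  refine ⟨ε, hε, fun τ hτ => ?_⟩
  rcases Set.eq_empty_or_nonempty {t : ℝ | 0 ≤ t ∧ τ ≤ Φ t} with he | hne
  · rw [he, Real.sInf_empty]
    simp
  · have h1 : ε ≤ sInf {t : ℝ | 0 ≤ t ∧ τ ≤ Φ t} := le_csInf hne (hlb τ hτ)
    apply ENNReal.ofReal_le_ofReal
    apply one_div_le_one_div_of_le (by positivity)
    have := hδpos.trans_le hτ
    nlinarith

lemma phi_surj (hΦ0 : ∀ t, 0 ≤ t → 0 ≤ Φ t) (hΦconv : ConvexOn ℝ (Set.Ici 0) Φ)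
    (hδ₀ : Φ 0 < δ₀)
    (hΦdiv : (∫⁻ τ in Set.Ioi δ₀,
        ENNReal.ofReal (1 / (τ * sInf {t : ℝ | 0 ≤ t ∧ τ ≤ Φ t}))) = ⊤) :
    ∀ τ : ℝ, {t : ℝ | 0 ≤ t ∧ τ ≤ Φ t}.Nonempty := by
  intro τ₁
  by_contra hempty
  rw [Set.not_nonempty_iff_eq_empty] at hempty
  have hbig : ∀ t, 0 ≤ t → Φ t < τ₁ := by
    intro t ht
    by_contra hge
    exact Set.eq_empty_iff_forall_notMem.1 hempty t ⟨ht, not_lt.1 hge⟩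
  set τs := max τ₁ δ₀ with hτs
  have hsplit : Set.Ioi δ₀ = Set.Ioc δ₀ τs ∪ Set.Ioi τs :=
    (Set.Ioc_union_Ioi_eq_Ioi (le_max_right _ _)).symm
  obtain ⟨ε, hε, hker⟩ := kernel_le hΦ0 hΦconv hδ₀
  have hzero : ∀ τ ∈ Set.Ioi τs,
      ENNReal.ofReal (1 / (τ * sInf {t : ℝ | 0 ≤ t ∧ τ ≤ Φ t})) = 0 := by
    intro τ hτ
    have he : {t : ℝ | 0 ≤ t ∧ τ ≤ Φ t} = ∅ := by
      apply Set.eq_empty_iff_forall_notMem.2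
      rintro t ⟨ht0, htτ⟩
      have h1 : Φ t < τ₁ := hbig t ht0
      have h2 : τ₁ ≤ τs := le_max_left _ _
      have h3 : τs < τ := hτ
      linarith
    rw [he, Real.sInf_empty, mul_zero]
    norm_num
  have hfin : (∫⁻ τ in Set.Ioi δ₀,
      ENNReal.ofReal (1 / (τ * sInf {t : ℝ | 0 ≤ t ∧ τ ≤ Φ t}))) < ⊤ := by
    rw [hsplit, lintegral_union measurableSet_Ioi (Set.Ioc_disjoint_Ioi le_rfl)]
    have h2 : (∫⁻ τ in Set.Ioi τs,
        ENNReal.ofReal (1 / (τ * sInf {t : ℝ | 0 ≤ t ∧ τ ≤ Φ t}))) = 0 := by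
      rw [setLIntegral_congr_fun measurableSet_Ioi hzero]
      simp
    have h1 := my_setLIntegral_le_const (s := Set.Ioc δ₀ τs) (measurableSet_Ioc)
      (fun τ => ENNReal.ofReal (1 / (τ * sInf {t : ℝ | 0 ≤ t ∧ τ ≤ Φ t})))
      (ENNReal.ofReal (1 / (δ₀ * ε))) (fun τ hτ => hker τ hτ.1.le)
    rw [h2, add_zero]
    refine lt_of_le_of_lt h1 ?_
    rw [Real.volume_Ioc]
    exact ENNReal.mul_lt_top ENNReal.ofReal_lt_top ENNReal.ofReal_lt_top
  rw [hΦdiv] at hfin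
  exact absurd hfin (lt_irrefl _)

end InvAux

section InvAux2
variable {Φ : ℝ → ℝ} {δ₀ : ℝ}

lemma inv_mono (hΦmono : MonotoneOn Φ (Set.Ici 0)) {τ₁ τ₂ : ℝ} (h : τ₁ ≤ τ₂)
    (hne : {t : ℝ | 0 ≤ t ∧ τ₂ ≤ Φ t}.Nonempty) :
    sInf {t : ℝ | 0 ≤ t ∧ τ₁ ≤ Φ t} ≤ sInf {t : ℝ | 0 ≤ t ∧ τ₂ ≤ Φ t} := by
  apply csInf_le_csInf ⟨0, fun t ht => ht.1⟩ hne
  exact fun t ht => ⟨ht.1, h.trans ht.2⟩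

lemma le_inv_of_lt (hΦmono : MonotoneOn Φ (Set.Ici 0)) {τ x : ℝ}
    (hne : {t : ℝ | 0 ≤ t ∧ τ ≤ Φ t}.Nonempty) (hx : 0 ≤ x) (h : Φ x < τ) :
    x ≤ sInf {t : ℝ | 0 ≤ t ∧ τ ≤ Φ t} := by
  apply le_csInf hne
  rintro t ⟨ht0, htτ⟩
  by_contra hlt
  push_neg at hlt
  exact absurd ((hΦmono (Set.mem_Ici.2 ht0) (Set.mem_Ici.2 hx) hlt.le).trans_lt h) (not_lt.2 htτ)

lemma phi_linear_lb (hΦ0 : ∀ t, 0 ≤ t → 0 ≤ Φ t) (hΦmono : MonotoneOn Φ (Set.Ici 0))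
    (hΦconv : ConvexOn ℝ (Set.Ici 0) Φ)
    (hsurj : ∀ τ : ℝ, {t : ℝ | 0 ≤ t ∧ τ ≤ Φ t}.Nonempty) :
    ∃ t₁ > 0, ∀ t, 0 ≤ t → Φ 0 - 1 + t / t₁ ≤ Φ t := by
  obtain ⟨t₁, ht₁0, ht₁⟩ := hsurj (Φ 0 + 1)
  have ht₁pos : 0 < t₁ := by
    rcases eq_or_lt_of_le ht₁0 with h | h
    · exfalso; rw [← h] at ht₁; linarith
    · exact h
  refine ⟨t₁, ht₁pos, fun t ht => ?_⟩
  rcases le_or_gt t t₁ with hc | hc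
  · have h1 : Φ 0 ≤ Φ t := hΦmono (Set.mem_Ici.2 le_rfl) (Set.mem_Ici.2 ht) ht
    have h2 : t / t₁ ≤ 1 := (div_le_one ht₁pos).2 hc
    linarith
  · have htpos : 0 < t := ht₁pos.trans hc
    have hconv := hΦconv.2 (Set.mem_Ici.2 (le_refl (0:ℝ))) (Set.mem_Ici.2 ht)
      (show (0:ℝ) ≤ 1 - t₁ / t by
        have : t₁ / t ≤ 1 := (div_le_one htpos).2 hc.le
        linarith)
      (show (0:ℝ) ≤ t₁ / t by positivity)
      (show (1 - t₁ / t) + t₁ / t = 1 by ring)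
    simp only [smul_eq_mul, mul_zero, zero_add] at hconv
    have hpt : t₁ / t * t = t₁ := div_mul_cancel₀ _ htpos.ne'
    rw [hpt] at hconv
    -- hconv : Φ t₁ ≤ (1 - t₁/t) * Φ 0 + t₁/t * Φ t
    -- ht₁ : Φ 0 + 1 ≤ Φ t₁
    -- goal : Φ 0 - 1 + t / t₁ ≤ Φ t
    have h3 : 1 ≤ t₁ / t * (Φ t - Φ 0) := by nlinarith [ht₁, hconv]
    have h4 : t ≤ t₁ * (Φ t - Φ 0) := by
      have := mul_le_mul_of_nonneg_right h3 htpos.le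
      rw [one_mul] at this
      calc t ≤ t₁ / t * (Φ t - Φ 0) * t := this
        _ = t₁ * (Φ t - Φ 0) * (t / t) := by ring
        _ = t₁ * (Φ t - Φ 0) := by rw [div_self htpos.ne', mul_one]
    have h5 : t / t₁ ≤ Φ t - Φ 0 := (div_le_iff₀ ht₁pos).2 (by nlinarith [h4])
    linarith
end InvAux2

section SumDiv
variable {Φ : ℝ → ℝ} {δ₀ : ℝ}

lemma Ioi_eq_iUnion_Ioc {c : ℝ} (hc : 0 < c) :
    Set.Ioi c = ⋃ k : ℕ, Set.Ioc (c * 4 ^ k) (c * 4 ^ (k + 1)) := by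
  ext τ
  simp only [Set.mem_Ioi, Set.mem_iUnion, Set.mem_Ioc]
  constructor
  · intro hτ
    have hex : ∃ n : ℕ, τ ≤ c * 4 ^ (n + 1) := by
      obtain ⟨n, hn⟩ := pow_unbounded_of_one_lt (τ / c) (by norm_num : (1:ℝ) < 4)
      rw [div_lt_iff₀ hc] at hn
      refine ⟨n, le_trans hn.le ?_⟩
      have h1 : (4:ℝ) ^ n ≤ 4 ^ (n + 1) := pow_le_pow_right₀ (by norm_num) (Nat.le_succ n)
      nlinarith
    classical
    set n₀ := Nat.find hex with hn₀
    refine ⟨n₀, ?_, Nat.find_spec hex⟩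
    rcases Nat.eq_zero_or_pos n₀ with h0 | hpos
    · rw [h0]; simpa using hτ
    · have := Nat.find_min hex (m := n₀ - 1) (by omega)
      push_neg at this
      have : c * 4 ^ (n₀ - 1 + 1) < τ := this
      rwa [Nat.sub_add_cancel hpos] at this
  · rintro ⟨k, hk1, _⟩
    have h1 : (1:ℝ) ≤ 4 ^ k := one_le_pow₀ (by norm_num)
    nlinarith

lemma sum_inv_div (hΦ0 : ∀ t, 0 ≤ t → 0 ≤ Φ t) (hΦmono : MonotoneOn Φ (Set.Ici 0))
    (hΦconv : ConvexOn ℝ (Set.Ici 0) Φ) (hδ₀ : Φ 0 < δ₀)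
    (hΦdiv : (∫⁻ τ in Set.Ioi δ₀,
        ENNReal.ofReal (1 / (τ * sInf {t : ℝ | 0 ≤ t ∧ τ ≤ Φ t}))) = ⊤)
    {c : ℝ} (hc : δ₀ + 1 ≤ c) :
    ∑' k : ℕ, ENNReal.ofReal (1 / (4 * sInf {t : ℝ | 0 ≤ t ∧ c * 4 ^ k ≤ Φ t})) = ⊤ := by
  have hsurj := phi_surj hΦ0 hΦconv hδ₀ hΦdiv
  obtain ⟨ε, hε, hεlb⟩ := inv_mem_lb hΦconv hδ₀
  have hδpos : 0 < δ₀ := lt_of_le_of_lt (hΦ0 0 le_rfl) hδ₀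
  have hcpos : 0 < c := by linarith
  have hδc : δ₀ < c := by linarith
  -- τ_k ≥ δ₀
  have hτk : ∀ k : ℕ, δ₀ ≤ c * 4 ^ k := fun k => by
    have h1 : (1:ℝ) ≤ 4 ^ k := one_le_pow₀ (by norm_num)
    nlinarith
  set x : ℕ → ℝ := fun k => sInf {t : ℝ | 0 ≤ t ∧ c * 4 ^ k ≤ Φ t} with hx
  have hxε : ∀ k, ε ≤ x k := fun k => le_csInf (hsurj _) (hεlb _ (hτk k))
  have hxpos : ∀ k, 0 < x k := fun k => lt_of_lt_of_le hε (hxε k)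
  -- tail integral is infinite
  have htail : (∫⁻ τ in Set.Ioi c,
      ENNReal.ofReal (1 / (τ * sInf {t : ℝ | 0 ≤ t ∧ τ ≤ Φ t}))) = ⊤ := by
    have hsplit : Set.Ioi δ₀ = Set.Ioc δ₀ c ∪ Set.Ioi c :=
      (Set.Ioc_union_Ioi_eq_Ioi hδc.le).symm
    rw [hsplit, lintegral_union measurableSet_Ioi (Set.Ioc_disjoint_Ioi le_rfl)] at hΦdiv
    obtain ⟨ε', hε', hker⟩ := kernel_le hΦ0 hΦconv hδ₀
    have h1 := my_setLIntegral_le_const (s := Set.Ioc δ₀ c) measurableSet_Ioc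
      (fun τ => ENNReal.ofReal (1 / (τ * sInf {t : ℝ | 0 ≤ t ∧ τ ≤ Φ t})))
      (ENNReal.ofReal (1 / (δ₀ * ε'))) (fun τ hτ => hker τ hτ.1.le)
    have hfin : (∫⁻ τ in Set.Ioc δ₀ c,
        ENNReal.ofReal (1 / (τ * sInf {t : ℝ | 0 ≤ t ∧ τ ≤ Φ t}))) ≠ ⊤ := by
      refine ne_of_lt (lt_of_le_of_lt h1 ?_)
      rw [Real.volume_Ioc]
      exact ENNReal.mul_lt_top ENNReal.ofReal_lt_top ENNReal.ofReal_lt_top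
    by_contra hne
    rw [ENNReal.add_eq_top] at hΦdiv
    tauto
  -- decompose the tail
  have hdisj : Pairwise (Function.onFun Disjoint
      fun k : ℕ => Set.Ioc (c * 4 ^ k) (c * 4 ^ (k + 1))) := by
    have key : ∀ {a b : ℕ}, a < b →
        Disjoint (Set.Ioc (c * 4 ^ a) (c * 4 ^ (a + 1))) (Set.Ioc (c * 4 ^ b) (c * 4 ^ (b + 1))) := by
      intro a b hab
      apply Set.Ioc_disjoint_Ioc.2
      have h1 : (4:ℝ) ^ (a + 1) ≤ 4 ^ b := pow_le_pow_right₀ (by norm_num) hab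
      have h2 : c * 4 ^ (a + 1) ≤ c * 4 ^ b := by nlinarith
      exact le_trans (min_le_left _ _) (le_trans h2 (le_max_right _ _))
    intro i j hij
    rcases lt_or_gt_of_ne hij with h | h
    · exact key h
    · exact (key h).symm
  rw [Ioi_eq_iUnion_Ioc hcpos, lintegral_iUnion (fun k => measurableSet_Ioc) hdisj _] at htail
  -- bound each piece
  have hpiece : ∀ k : ℕ, (∫⁻ τ in Set.Ioc (c * 4 ^ k) (c * 4 ^ (k + 1)),
      ENNReal.ofReal (1 / (τ * sInf {t : ℝ | 0 ≤ t ∧ τ ≤ Φ t})))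
      ≤ ENNReal.ofReal (3 / x k) := by
    intro k
    have hτkpos : 0 < c * 4 ^ k := by positivity
    have hb := my_setLIntegral_le_const (s := Set.Ioc (c * 4 ^ k) (c * 4 ^ (k + 1)))
      measurableSet_Ioc
      (fun τ => ENNReal.ofReal (1 / (τ * sInf {t : ℝ | 0 ≤ t ∧ τ ≤ Φ t})))
      (ENNReal.ofReal (1 / (c * 4 ^ k * x k))) ?_
    · refine le_trans hb ?_
      have hxk := hxpos k
      rw [Real.volume_Ioc, ← ENNReal.ofReal_mul
        (one_div_nonneg.2 (by nlinarith [hτkpos, hxk]))]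
      apply ENNReal.ofReal_le_ofReal
      have h4 : c * 4 ^ (k + 1) - c * 4 ^ k = 3 * (c * 4 ^ k) := by ring
      rw [h4, show (1:ℝ) / (c * 4 ^ k * x k) * (3 * (c * 4 ^ k)) = 3 / x k by
        field_simp]
    · rintro τ ⟨hτ1, hτ2⟩
      have hmono2 : x k ≤ sInf {t : ℝ | 0 ≤ t ∧ τ ≤ Φ t} :=
        inv_mono hΦmono hτ1.le (hsurj _)
      apply ENNReal.ofReal_le_ofReal
      apply one_div_le_one_div_of_le (by nlinarith [hxpos k, hτkpos])
      have : 0 < x k := hxpos k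
      nlinarith
  -- conclude
  have hsum : ∑' k : ℕ, ENNReal.ofReal (3 / x k) = ⊤ :=
    top_unique (htail ▸ ENNReal.tsum_le_tsum hpiece)
  have hfactor : ∀ k : ℕ, ENNReal.ofReal (3 / x k)
      = ENNReal.ofReal 12 * ENNReal.ofReal (1 / (4 * x k)) := by
    intro k
    rw [← ENNReal.ofReal_mul (by norm_num)]
    congr 1
    have := (hxpos k).ne'
    field_simp
    ring
  rw [funext hfactor] at hsum
  · rw [ENNReal.tsum_mul_left] at hsum
    rcases ENNReal.mul_eq_top.1 hsum with ⟨_, h⟩ | ⟨h, _⟩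
    · exact h
    · exact absurd h (by simp)
end SumDiv

section Jensen

lemma circle_avg_le {Φ : ℝ → ℝ}
    (hΦ0 : ∀ t, 0 ≤ t → 0 ≤ Φ t) (hΦmono : MonotoneOn Φ (Set.Ici 0))
    (hΦconv : ConvexOn ℝ (Set.Ici 0) Φ)
    {t₁ : ℝ} (ht₁ : 0 < t₁) (hlin : ∀ t, 0 ≤ t → Φ 0 - 1 + t / t₁ ≤ Φ t)
    (Q : ℂ → ℝ) (hQm : Measurable Q) (hQpos : ∀ z, 0 ≤ Q z)
    {r τ : ℝ} (hτne : {t : ℝ | 0 ≤ t ∧ τ ≤ Φ t}.Nonempty) (hτpos : 0 < τ)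
    (hP : (∫⁻ θ in Set.Ioo 0 (2 * Real.pi),
        ENNReal.ofReal (Φ (Q (r * Complex.exp (θ * Complex.I))))) < ENNReal.ofReal (2 * Real.pi * τ)) :
    (∫⁻ θ in Set.Ioo 0 (2 * Real.pi), ENNReal.ofReal (Q (r * Complex.exp (θ * Complex.I))))
      ≤ ENNReal.ofReal (2 * Real.pi * sInf {t : ℝ | 0 ≤ t ∧ τ ≤ Φ t}) := by
  have hπ : 0 < 2 * Real.pi := by positivity
  set μ : Measure ℝ := volume.restrict (Set.Ioo 0 (2 * Real.pi)) with hμ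
  have hμuniv : μ Set.univ = ENNReal.ofReal (2 * Real.pi) := by
    rw [hμ, Measure.restrict_apply_univ, Real.volume_Ioo, sub_zero]
  haveI : IsFiniteMeasure μ := ⟨by rw [hμuniv]; exact ENNReal.ofReal_lt_top⟩
  haveI : NeZero μ := ⟨by
    intro h
    have := hμuniv
    rw [h] at this
    simp only [Measure.coe_zero, Pi.zero_apply] at this
    exact absurd this.symm (by simp [ENNReal.ofReal_eq_zero, not_le, hπ, Real.pi_pos])⟩
  set f : ℝ → ℝ := fun θ => Q (r * Complex.exp (θ * Complex.I)) with hf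
  have hfc : Continuous fun θ : ℝ => (r : ℂ) * Complex.exp (θ * Complex.I) := by
    exact continuous_const.mul (Complex.continuous_exp.comp
      (Complex.continuous_ofReal.mul continuous_const))
  have hfm : Measurable f := hQm.comp hfc.measurable
  have hf0 : ∀ θ, 0 ≤ f θ := fun θ => hQpos _
  set Φm : ℝ → ℝ := fun y => Φ (max y 0) with hΦm
  have hΦm_mono : Monotone Φm := fun a b hab =>
    hΦmono (Set.mem_Ici.2 (le_max_right _ _)) (Set.mem_Ici.2 (le_max_right _ _))
      (max_le_max hab le_rfl)
  have hΦm_meas : Measurable Φm := hΦm_mono.measurable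
  have hcomp : (fun θ => Φ (f θ)) = fun θ => Φm (f θ) := by
    funext θ
    rw [hΦm]
    simp only [max_eq_left (hf0 θ)]
  have hΦf_meas : Measurable fun θ => Φ (f θ) := by rw [hcomp]; exact hΦm_meas.comp hfm
  have hPμ : (∫⁻ θ, ENNReal.ofReal (Φ (f θ)) ∂μ) < ENNReal.ofReal (2 * Real.pi * τ) := hP
  have hPfin : (∫⁻ θ, ENNReal.ofReal (Φ (f θ)) ∂μ) < ⊤ := hPμ.trans ENNReal.ofReal_lt_top
  -- integrability of Φ ∘ f
  have hΦf_int : Integrable (fun θ => Φ (f θ)) μ := by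
    refine ⟨hΦf_meas.aestronglyMeasurable, ?_⟩
    rw [hasFiniteIntegral_iff_ofReal (Filter.Eventually.of_forall fun θ => hΦ0 _ (hf0 θ))]
    exact hPfin
  -- integrability of f
  have hf_int : Integrable f μ := by
    refine ⟨hfm.aestronglyMeasurable, ?_⟩
    rw [hasFiniteIntegral_iff_ofReal (Filter.Eventually.of_forall hf0)]
    have hptw : ∀ θ, ENNReal.ofReal (f θ) ≤
        ENNReal.ofReal t₁ * ENNReal.ofReal (Φ (f θ)) + ENNReal.ofReal (t₁ * (1 - Φ 0)) := by
      intro θ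
      have h1 := hlin (f θ) (hf0 θ)
      have h2 : f θ ≤ t₁ * Φ (f θ) + t₁ * (1 - Φ 0) := by
        have h3 : f θ / t₁ ≤ Φ (f θ) + 1 - Φ 0 := by linarith
        have h4 := (div_le_iff₀ ht₁).1 h3
        nlinarith
      calc ENNReal.ofReal (f θ) ≤ ENNReal.ofReal (t₁ * Φ (f θ) + t₁ * (1 - Φ 0)) :=
            ENNReal.ofReal_le_ofReal h2
        _ ≤ ENNReal.ofReal (t₁ * Φ (f θ)) + ENNReal.ofReal (t₁ * (1 - Φ 0)) :=
            ENNReal.ofReal_add_le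
        _ = ENNReal.ofReal t₁ * ENNReal.ofReal (Φ (f θ)) + ENNReal.ofReal (t₁ * (1 - Φ 0)) := by
            rw [ENNReal.ofReal_mul ht₁.le]
    calc (∫⁻ θ, ENNReal.ofReal (f θ) ∂μ)
        ≤ ∫⁻ θ, ENNReal.ofReal t₁ * ENNReal.ofReal (Φ (f θ))
            + ENNReal.ofReal (t₁ * (1 - Φ 0)) ∂μ := lintegral_mono hptw
      _ = ENNReal.ofReal t₁ * (∫⁻ θ, ENNReal.ofReal (Φ (f θ)) ∂μ)
            + ENNReal.ofReal (t₁ * (1 - Φ 0)) * μ Set.univ := by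
          rw [lintegral_add_right _ measurable_const, lintegral_const,
            lintegral_const_mul _ (by exact (ENNReal.measurable_ofReal.comp hΦf_meas))]
      _ < ⊤ := by
          apply ENNReal.add_lt_top.2
          constructor
          · exact ENNReal.mul_lt_top ENNReal.ofReal_lt_top hPfin
          · rw [hμuniv]; exact ENNReal.mul_lt_top ENNReal.ofReal_lt_top ENNReal.ofReal_lt_top
  -- Jensen
  have hJ : Φ (⨍ θ, f θ ∂μ) ≤ ⨍ θ, Φ (f θ) ∂μ :=
    hΦconv.map_average_le (phi_continuousOn hΦmono hΦconv) isClosed_Ici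
      (Filter.Eventually.of_forall fun θ => Set.mem_Ici.2 (hf0 θ)) hf_int hΦf_int
  set qbar := ⨍ θ, f θ ∂μ with hqbar
  have hμtoReal : μ.real Set.univ = 2 * Real.pi := by
    rw [measureReal_def, hμuniv, ENNReal.toReal_ofReal hπ.le]
  have hq0 : 0 ≤ qbar := by
    rw [hqbar, average_eq, smul_eq_mul]
    apply mul_nonneg (by positivity)
    exact integral_nonneg hf0
  -- compute the average of Φ ∘ f
  have hintΦ : ∫ θ, Φ (f θ) ∂μ = (∫⁻ θ, ENNReal.ofReal (Φ (f θ)) ∂μ).toReal :=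
    integral_eq_lintegral_of_nonneg_ae (Filter.Eventually.of_forall fun θ => hΦ0 _ (hf0 θ))
      hΦf_meas.aestronglyMeasurable
  have havgΦ : (⨍ θ, Φ (f θ) ∂μ) < τ := by
    rw [average_eq, hμtoReal, smul_eq_mul, hintΦ]
    have h1 : (∫⁻ θ, ENNReal.ofReal (Φ (f θ)) ∂μ).toReal < 2 * Real.pi * τ :=
      ENNReal.toReal_lt_of_lt_ofReal hPμ
    rw [inv_mul_lt_iff₀ hπ]
    linarith [h1]
  have hqτ : Φ qbar < τ := lt_of_le_of_lt hJ havgΦ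
  have hqle : qbar ≤ sInf {t : ℝ | 0 ≤ t ∧ τ ≤ Φ t} := le_inv_of_lt hΦmono hτne hq0 hqτ
  -- conclude
  have hL : (∫⁻ θ, ENNReal.ofReal (f θ) ∂μ) = ENNReal.ofReal (∫ θ, f θ ∂μ) :=
    (ofReal_integral_eq_lintegral_ofReal hf_int (Filter.Eventually.of_forall hf0)).symm
  have hintf : ∫ θ, f θ ∂μ = 2 * Real.pi * qbar := by
    rw [hqbar, average_eq, hμtoReal, smul_eq_mul]
    field_simp
  rw [show (∫⁻ θ in Set.Ioo 0 (2 * Real.pi),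
      ENNReal.ofReal (Q (r * Complex.exp (θ * Complex.I)))) = ∫⁻ θ, ENNReal.ofReal (f θ) ∂μ from rfl,
    hL, hintf]
  apply ENNReal.ofReal_le_ofReal
  nlinarith [hqle, hπ]

end Jensen

section Polar
open Complex

lemma point_eq (p : ℝ × ℝ) :
    Complex.measurableEquivRealProd.symm (polarCoord.symm p)
      = (p.1 : ℂ) * Complex.exp (p.2 * Complex.I) := by
  have h1 : polarCoord.symm p = (p.1 * Real.cos p.2, p.1 * Real.sin p.2) := rfl
  rw [h1]
  have h2 : Complex.measurableEquivRealProd.symm (p.1 * Real.cos p.2, p.1 * Real.sin p.2)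
      = Complex.equivRealProd.symm (p.1 * Real.cos p.2, p.1 * Real.sin p.2) := rfl
  rw [h2]
  rw [Complex.exp_mul_I, ← Complex.ofReal_cos, ← Complex.ofReal_sin]
  rw [Complex.equivRealProd_symm_apply]
  push_cast
  ring

lemma polar_inj : Set.InjOn (⇑polarCoord.symm)
    ((Set.Ioo (0:ℝ) 1) ×ˢ (Set.Ioo (0:ℝ) (2 * Real.pi))) := by
  rintro p hp q hq heq
  have hp1 : 0 < p.1 := hp.1.1
  have hq1 : 0 < q.1 := hq.1.1
  have hC : (p.1 : ℂ) * Complex.exp (p.2 * Complex.I)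
      = (q.1 : ℂ) * Complex.exp (q.2 * Complex.I) := by
    rw [← point_eq, ← point_eq, heq]
  have habs : |p.1| = |q.1| := by
    have := congrArg (‖·‖) hC
    simpa [Complex.norm_exp_ofReal_mul_I, abs_of_pos] using this
  have h1 : p.1 = q.1 := by
    rwa [abs_of_pos hp1, abs_of_pos hq1] at habs
  have hexp : Complex.exp (p.2 * Complex.I) = Complex.exp (q.2 * Complex.I) := by
    have hne : (p.1 : ℂ) ≠ 0 := Complex.ofReal_ne_zero.2 hp1.ne'
    rw [h1] at hC
    exact mul_left_cancel₀ (by rwa [h1] at hne) hC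
  obtain ⟨n, hn⟩ := Complex.exp_eq_exp_iff_exists_int.1 hexp
  have him := congrArg Complex.im hn
  simp only [Complex.mul_im, Complex.ofReal_re, Complex.I_im, Complex.ofReal_im, Complex.I_re,
    mul_zero, mul_one, zero_mul, add_zero, Complex.add_im, Complex.mul_re,
    Complex.intCast_im, Complex.intCast_re] at him
  norm_num at him
  -- him : p.2 = q.2 + n * (2 * π)  (up to normalization)
  have hn0 : n = 0 := by
    have h2 : p.2 ∈ Set.Ioo (0:ℝ) (2 * Real.pi) := hp.2
    have h3 : q.2 ∈ Set.Ioo (0:ℝ) (2 * Real.pi) := hq.2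
    have hπ : 0 < Real.pi := Real.pi_pos
    by_contra hne
    have hcase : (n:ℝ) ≤ -1 ∨ (1:ℝ) ≤ (n:ℝ) := by
      rcases lt_or_gt_of_ne hne with h | h
      · left; exact_mod_cast (by omega : n ≤ -1)
      · right; exact_mod_cast (by omega : (1:ℤ) ≤ n)
    rcases hcase with h | h
    · nlinarith [h2.1, h2.2, h3.1, h3.2]
    · nlinarith [h2.1, h2.2, h3.1, h3.2]
  rw [hn0] at him
  simp at him
  exact Prod.ext h1 him

end Polar

section PolarBound

lemma polar_bound (g : ℂ → ℝ≥0∞) (hg : Measurable g) :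
    (∫⁻ r in Set.Ioo (0:ℝ) 1, ENNReal.ofReal r *
      ∫⁻ θ in Set.Ioo (0:ℝ) (2 * Real.pi), g ((r : ℂ) * Complex.exp (θ * Complex.I)))
    ≤ ∫⁻ z in Metric.ball (0 : ℂ) 1, g z ∂volume := by
  classical
  set s : Set (ℝ × ℝ) := (Set.Ioo (0:ℝ) 1) ×ˢ (Set.Ioo (0:ℝ) (2 * Real.pi)) with hs
  have hsm : MeasurableSet s := (measurableSet_Ioo).prod measurableSet_Ioo
  set B : ℝ × ℝ → ℝ × ℝ →L[ℝ] ℝ × ℝ := fun p =>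
    LinearMap.toContinuousLinearMap (Matrix.toLin (Module.Basis.finTwoProd ℝ) (Module.Basis.finTwoProd ℝ)
      !![Real.cos p.2, -p.1 * Real.sin p.2; Real.sin p.2, p.1 * Real.cos p.2]) with hB
  have hder : ∀ p ∈ s, HasFDerivWithinAt (⇑polarCoord.symm) (B p) s p := fun p _ =>
    (hasFDerivAt_polarCoord_symm p).hasFDerivWithinAt
  have hBdet : ∀ p, (B p).det = p.1 := by
    intro p
    conv_rhs => rw [← one_mul p.1, ← Real.cos_sq_add_sin_sq p.2]
    simp only [hB, neg_mul, LinearMap.det_toContinuousLinearMap, LinearMap.det_toLin,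
      Matrix.det_fin_two_of, sub_neg_eq_add]
    ring
  set F : ℝ × ℝ → ℝ≥0∞ := fun p => g (Complex.measurableEquivRealProd.symm p) with hF
  have hFm : Measurable F := hg.comp (Complex.measurableEquivRealProd.symm.measurable)
  have hchg := lintegral_image_eq_lintegral_abs_det_fderiv_mul volume hsm hder polar_inj F
  -- image is inside the image of the ball
  have himg : (⇑polarCoord.symm) '' s ⊆ ⇑Complex.measurableEquivRealProd '' (Metric.ball 0 1) := by
    rintro x ⟨p, hp, rfl⟩
    have h1 : Complex.measurableEquivRealProd.symm (polarCoord.symm p)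
        = (p.1 : ℂ) * Complex.exp (p.2 * Complex.I) := point_eq p
    refine ⟨Complex.measurableEquivRealProd.symm (polarCoord.symm p), ?_, by simp⟩
    rw [h1]
    rw [Metric.mem_ball, dist_zero_right]
    have : ‖(p.1 : ℂ) * Complex.exp (p.2 * Complex.I)‖
        = |p.1| * 1 := by
      rw [norm_mul, Complex.norm_real]
      congr 1
      exact Complex.norm_exp_ofReal_mul_I p.2
    rw [this, mul_one, abs_of_pos hp.1.1]
    exact hp.1.2
  have hball : (∫⁻ p in ⇑Complex.measurableEquivRealProd '' (Metric.ball 0 1), F p)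
      = ∫⁻ z in Metric.ball (0 : ℂ) 1, g z ∂volume := by
    rw [show ⇑Complex.measurableEquivRealProd '' (Metric.ball 0 1)
        = ⇑Complex.measurableEquivRealProd.symm ⁻¹' (Metric.ball 0 1) from
      (MeasurableEquiv.image_eq_preimage_symm _ _)]
    exact (Complex.volume_preserving_equiv_real_prod.symm).setLIntegral_comp_preimage_emb
      (Complex.measurableEquivRealProd.symm.measurableEmbedding) g (Metric.ball 0 1)
  -- pass from the constructed integral to the iterated one
  have hiter : (∫⁻ p in s, ENNReal.ofReal |(B p).det| * F (polarCoord.symm p))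
      = ∫⁻ r in Set.Ioo (0:ℝ) 1, ENNReal.ofReal r *
        ∫⁻ θ in Set.Ioo (0:ℝ) (2 * Real.pi), g ((r : ℂ) * Complex.exp (θ * Complex.I)) := by
    have hptw : ∀ p ∈ s, ENNReal.ofReal |(B p).det| * F (polarCoord.symm p)
        = ENNReal.ofReal p.1 * g ((p.1 : ℂ) * Complex.exp (p.2 * Complex.I)) := by
      intro p hp
      rw [hBdet p, abs_of_pos hp.1.1]
      show ENNReal.ofReal p.1 * g (Complex.measurableEquivRealProd.symm (polarCoord.symm p))
        = ENNReal.ofReal p.1 * g ((p.1 : ℂ) * Complex.exp (p.2 * Complex.I))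
      rw [point_eq p]
    rw [setLIntegral_congr_fun hsm hptw]
    have hmeas : Measurable fun p : ℝ × ℝ =>
        ENNReal.ofReal p.1 * g ((p.1 : ℂ) * Complex.exp (p.2 * Complex.I)) := by
      apply Measurable.mul
      · exact ENNReal.measurable_ofReal.comp measurable_fst
      · apply hg.comp
        apply Measurable.mul
        · exact Complex.measurable_ofReal.comp measurable_fst
        · exact (Complex.measurable_exp.comp
            ((Complex.measurable_ofReal.comp measurable_snd).mul measurable_const))
    rw [hs, MeasureTheory.Measure.volume_eq_prod, ← Measure.prod_restrict,
      lintegral_prod _ hmeas.aemeasurable]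
    congr 1
    funext r
    have hinner : Measurable fun y : ℝ => g ((r : ℂ) * Complex.exp (y * Complex.I)) := by
      apply hg.comp
      exact measurable_const.mul (Complex.measurable_exp.comp
        ((Complex.measurable_ofReal).mul measurable_const))
    simp only
    rw [lintegral_const_mul _ hinner]
  calc (∫⁻ r in Set.Ioo (0:ℝ) 1, ENNReal.ofReal r *
      ∫⁻ θ in Set.Ioo (0:ℝ) (2 * Real.pi), g ((r : ℂ) * Complex.exp (θ * Complex.I)))
      = ∫⁻ p in s, ENNReal.ofReal |(B p).det| * F (polarCoord.symm p) := hiter.symm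
    _ = ∫⁻ x in (⇑polarCoord.symm) '' s, F x := hchg.symm
    _ ≤ ∫⁻ p in ⇑Complex.measurableEquivRealProd '' (Metric.ball 0 1), F p :=
        lintegral_mono_set himg
    _ = ∫⁻ z in Metric.ball (0 : ℂ) 1, g z ∂volume := hball

end PolarBound


/-- Theorem 2.1: let `Φ : [0,∞] → [0,∞]` be non-decreasing and convex with
`∫_{δ₀}^∞ dτ/(τ Φ⁻¹(τ)) = ∞` for some `δ₀ > Φ(0)` (`Φ⁻¹` the generalized inverse), and let
`Q : 𝔻 → [0,∞]` be measurable with `∫_𝔻 Φ(Q) dm < ∞`. Then `∫_0^1 dr/(r q(r)) = ∞`, where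
`q(r) = ‖Q‖₁(0,r)/(2πr)` is the average of `Q` over the circle `|z| = r`. -/
theorem divergence_of_reciprocal_circle_averages
    (Φ : ℝ → ℝ) (hΦ0 : ∀ t, 0 ≤ t → 0 ≤ Φ t)
    (hΦmono : MonotoneOn Φ (Set.Ici 0)) (hΦconv : ConvexOn ℝ (Set.Ici 0) Φ)
    (δ₀ : ℝ) (hδ₀ : Φ 0 < δ₀)
    (hΦdiv : (∫⁻ τ in Set.Ioi δ₀,
        ENNReal.ofReal (1 / (τ * sInf {t : ℝ | 0 ≤ t ∧ τ ≤ Φ t}))) = ⊤)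
    (Q : ℂ → ℝ) (hQm : Measurable Q) (hQpos : ∀ z, 0 ≤ Q z)
    (hQint : (∫⁻ z in Metric.ball (0 : ℂ) 1, ENNReal.ofReal (Φ (Q z)) ∂volume) < ⊤) :
    (∫⁻ r in Set.Ioo (0 : ℝ) 1,
        (ENNReal.ofReal r * (circleL1 Q 0 r / ENNReal.ofReal (2 * Real.pi * r)))⁻¹) = ⊤ := by
  have hπ : 0 < Real.pi := Real.pi_pos
  have hsurj := phi_surj hΦ0 hΦconv hδ₀ hΦdiv
  obtain ⟨t₁, ht₁, hlin⟩ := phi_linear_lb hΦ0 hΦmono hΦconv hsurj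
  have hδpos : 0 < δ₀ := lt_of_le_of_lt (hΦ0 0 le_rfl) hδ₀
  -- measurability of Φ ∘ Q
  have hΦm_mono : Monotone (fun y : ℝ => Φ (max y 0)) := fun a b hab =>
    hΦmono (Set.mem_Ici.2 (le_max_right _ _)) (Set.mem_Ici.2 (le_max_right _ _))
      (max_le_max hab le_rfl)
  have hΦQ_meas : Measurable fun z : ℂ => Φ (Q z) := by
    have he : (fun z : ℂ => Φ (Q z)) = fun z => Φ (max (Q z) 0) :=
      funext fun z => by rw [max_eq_left (hQpos z)]
    rw [he]
    exact hΦm_mono.measurable.comp hQm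
  -- the circle integrals
  set P : ℝ → ℝ≥0∞ := fun r => ∫⁻ θ in Set.Ioo (0:ℝ) (2 * Real.pi),
    ENNReal.ofReal (Φ (Q ((r : ℂ) * Complex.exp (θ * Complex.I)))) with hPdef
  set L : ℝ → ℝ≥0∞ := fun r => ∫⁻ θ in Set.Ioo (0:ℝ) (2 * Real.pi),
    ENNReal.ofReal (Q ((r : ℂ) * Complex.exp (θ * Complex.I))) with hLdef
  have hmap_meas : Measurable fun p : ℝ × ℝ => (p.1 : ℂ) * Complex.exp (p.2 * Complex.I) :=
    (Complex.measurable_ofReal.comp measurable_fst).mul (Complex.measurable_exp.comp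
      ((Complex.measurable_ofReal.comp measurable_snd).mul measurable_const))
  have hPm : Measurable P := by
    have hu : Measurable (Function.uncurry fun (r θ : ℝ) =>
        ENNReal.ofReal (Φ (Q ((r : ℂ) * Complex.exp (θ * Complex.I))))) :=
      ENNReal.measurable_ofReal.comp (hΦQ_meas.comp hmap_meas)
    exact Measurable.lintegral_prod_right
      (ν := volume.restrict (Set.Ioo (0:ℝ) (2 * Real.pi))) hu
  -- the area bound
  have hBd := polar_bound (fun z => ENNReal.ofReal (Φ (Q z)))
    (ENNReal.measurable_ofReal.comp hΦQ_meas)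
  set M : ℝ := (∫⁻ z in Metric.ball (0 : ℂ) 1, ENNReal.ofReal (Φ (Q z)) ∂volume).toReal + 1
    with hMdef
  have hM1 : 1 ≤ M := by
    rw [hMdef]
    have := ENNReal.toReal_nonneg (a := ∫⁻ z in Metric.ball (0 : ℂ) 1,
      ENNReal.ofReal (Φ (Q z)) ∂volume)
    linarith
  have hMpos : 0 < M := lt_of_lt_of_le one_pos hM1
  have hint_le : (∫⁻ r in Set.Ioo (0:ℝ) 1, ENNReal.ofReal r * P r) ≤ ENNReal.ofReal M := by
    refine le_trans hBd ?_
    rw [hMdef]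
    refine le_trans (le_of_eq (ENNReal.ofReal_toReal hQint.ne).symm) ?_
    apply ENNReal.ofReal_le_ofReal
    linarith
  set c : ℝ := max (δ₀ + 1) (16 * M / Real.pi) with hcdef
  have hc1 : δ₀ + 1 ≤ c := le_max_left _ _
  have hc2 : 16 * M / Real.pi ≤ c := le_max_right _ _
  have hcpos : 0 < c := lt_of_lt_of_le (by linarith) hc1
  have hsum := sum_inv_div hΦ0 hΦmono hΦconv hδ₀ hΦdiv hc1
  set τk : ℕ → ℝ := fun k => c * 4 ^ k with hτkdef
  set xk : ℕ → ℝ := fun k => sInf {t : ℝ | 0 ≤ t ∧ τk k ≤ Φ t} with hxkdef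
  have hτkpos : ∀ k, 0 < τk k := fun k => by positivity
  have hτkδ : ∀ k, δ₀ < τk k := fun k => by
    have h1 : (1:ℝ) ≤ 4 ^ k := one_le_pow₀ (by norm_num)
    have := hc1
    simp only [hτkdef]
    nlinarith
  obtain ⟨ε, hε, hεlb⟩ := inv_mem_lb hΦconv hδ₀
  have hxkpos : ∀ k, 0 < xk k := fun k =>
    lt_of_lt_of_le hε (le_csInf (hsurj _) (hεlb _ (hτkδ k).le))
  -- the dyadic intervals
  set I : ℕ → Set ℝ := fun k => Set.Ioc (1 / 2 ^ (k + 2)) (1 / 2 ^ (k + 1) : ℝ) with hIdef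
  have hIm : ∀ k, MeasurableSet (I k) := fun k => measurableSet_Ioc
  have hIsub : ∀ k, I k ⊆ Set.Ioo (0:ℝ) 1 := by
    rintro k r ⟨h1, h2⟩
    constructor
    · exact lt_trans (by positivity) h1
    · refine lt_of_le_of_lt h2 ?_
      rw [div_lt_one (by positivity)]
      exact one_lt_pow₀ (by norm_num) (by omega)
  set Bad : ℕ → Set ℝ := fun k => {r : ℝ | ENNReal.ofReal (2 * Real.pi * τk k) ≤ P r} with hBadDef
  have hBadm : ∀ k, MeasurableSet (Bad k) :=
    fun k => measurableSet_le measurable_const hPm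
  set G : ℕ → Set ℝ := fun k => I k \ Bad k with hGdef
  have hGm : ∀ k, MeasurableSet (G k) := fun k => (hIm k).diff (hBadm k)
  have hGsub : ∀ k, G k ⊆ Set.Ioo (0:ℝ) 1 := fun k => subset_trans Set.diff_subset (hIsub k)
  -- Chebyshev
  have hCheb : ∀ k, (∫⁻ r in I k, P r) ≤ ENNReal.ofReal (2 ^ (k + 2) * M) := by
    intro k
    have hptw : ∀ r ∈ I k, P r ≤ ENNReal.ofReal (2 ^ (k + 2)) * (ENNReal.ofReal r * P r) := by
      intro r hr
      have h1 : (1:ℝ) ≤ 2 ^ (k + 2) * r := by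
        have h2 : (1:ℝ) / 2 ^ (k + 2) < r := hr.1
        rw [div_lt_iff₀ (by positivity)] at h2
        nlinarith
      calc P r = 1 * P r := (one_mul _).symm
        _ ≤ (ENNReal.ofReal (2 ^ (k + 2)) * ENNReal.ofReal r) * P r := by
            apply mul_le_mul_left
            rw [← ENNReal.ofReal_mul (by positivity), ← ENNReal.ofReal_one]
            exact ENNReal.ofReal_le_ofReal h1
        _ = ENNReal.ofReal (2 ^ (k + 2)) * (ENNReal.ofReal r * P r) := mul_assoc _ _ _
    calc (∫⁻ r in I k, P r)
        ≤ ∫⁻ r in I k, ENNReal.ofReal (2 ^ (k + 2)) * (ENNReal.ofReal r * P r) :=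
          lintegral_mono_ae ((ae_restrict_iff' (hIm k)).2 (Filter.Eventually.of_forall hptw))
      _ = ENNReal.ofReal (2 ^ (k + 2)) * ∫⁻ r in I k, ENNReal.ofReal r * P r :=
          lintegral_const_mul' _ _ ENNReal.ofReal_ne_top
      _ ≤ ENNReal.ofReal (2 ^ (k + 2)) * ∫⁻ r in Set.Ioo (0:ℝ) 1, ENNReal.ofReal r * P r :=
          mul_le_mul_right (lintegral_mono_set (hIsub k)) _
      _ ≤ ENNReal.ofReal (2 ^ (k + 2)) * ENNReal.ofReal M := mul_le_mul_right hint_le _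
      _ = ENNReal.ofReal (2 ^ (k + 2) * M) := (ENNReal.ofReal_mul (by positivity)).symm
  -- Markov
  have hMarkov : ∀ k, volume (I k ∩ Bad k) ≤ ENNReal.ofReal (1 / 2 ^ (k + 3)) := by
    intro k
    have hiden : (volume.restrict (I k)) {r | ENNReal.ofReal (2 * Real.pi * τk k) ≤ P r}
        = volume ({r | ENNReal.ofReal (2 * Real.pi * τk k) ≤ P r} ∩ I k) :=
      Measure.restrict_apply (hBadm k)
    have hMk := mul_meas_ge_le_lintegral₀ (μ := volume.restrict (I k))
      (hPm.aemeasurable) (ENNReal.ofReal (2 * Real.pi * τk k))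
    rw [hiden] at hMk
    have hMk2 : ENNReal.ofReal (2 * Real.pi * τk k) * volume (I k ∩ Bad k)
        ≤ ENNReal.ofReal (2 ^ (k + 2) * M) := by
      rw [Set.inter_comm]
      exact le_trans hMk (hCheb k)
    have hεne : ENNReal.ofReal (2 * Real.pi * τk k) ≠ 0 := by
      rw [Ne, ENNReal.ofReal_eq_zero, not_le]
      positivity
    rw [mul_comm] at hMk2
    have hdiv := ENNReal.le_div_iff_mul_le (Or.inl hεne) (Or.inl ENNReal.ofReal_ne_top) |>.2 hMk2
    refine le_trans hdiv ?_
    rw [← ENNReal.ofReal_div_of_pos (by positivity)]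
    apply ENNReal.ofReal_le_ofReal
    rw [div_le_div_iff₀ (by positivity) (by positivity)]
    have h32 : 32 * M * 4 ^ k ≤ 2 * Real.pi * τk k := by
      simp only [hτkdef]
      have h4 : 16 * M / Real.pi * Real.pi = 16 * M := by field_simp
      have h5 : (16 * M / Real.pi) * 4 ^ k ≤ c * 4 ^ k :=
        mul_le_mul_of_nonneg_right hc2 (by positivity)
      calc 32 * M * 4 ^ k = 2 * (16 * M / Real.pi * Real.pi) * 4 ^ k := by rw [h4]; ring
        _ = 2 * Real.pi * ((16 * M / Real.pi) * 4 ^ k) := by ring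
        _ ≤ 2 * Real.pi * (c * 4 ^ k) := by nlinarith [h5, hπ]
    calc 2 ^ (k + 2) * M * 2 ^ (k + 3) = 32 * M * 4 ^ k := by
          rw [pow_add, pow_add]; ring_nf; rw [show (4:ℝ) ^ k = 2 ^ k * 2 ^ k by
            rw [← mul_pow]; norm_num]; ring
      _ ≤ 2 * Real.pi * τk k := h32
      _ = 1 * (2 * Real.pi * τk k) := (one_mul _).symm
  -- good sets have volume
  have hGvol : ∀ k, ENNReal.ofReal (1 / 2 ^ (k + 3)) ≤ volume (G k) := by
    intro k
    have h1 : G k = I k \ (I k ∩ Bad k) := by rw [hGdef]; rw [Set.diff_self_inter]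
    rw [h1]
    refine le_trans ?_ (le_measure_diff)
    have hIvol : volume (I k) = ENNReal.ofReal (1 / 2 ^ (k + 2)) := by
      rw [hIdef]
      simp only [Real.volume_Ioc]
      congr 1
      rw [pow_add, pow_add]
      norm_num
      ring
    rw [hIvol]
    refine le_trans ?_ (tsub_le_tsub le_rfl (hMarkov k))
    rw [← ENNReal.ofReal_sub _ (by positivity)]
    apply ENNReal.ofReal_le_ofReal
    rw [pow_add, pow_add]
    norm_num
    ring_nf
    nlinarith [pow_pos (show (0:ℝ) < 2 by norm_num) k]
  -- pointwise lower bound on good sets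
  have hlow : ∀ k, ∀ r ∈ G k,
      (ENNReal.ofReal (1 / 2 ^ (k + 1) * xk k))⁻¹
        ≤ (ENNReal.ofReal r * (circleL1 Q 0 r / ENNReal.ofReal (2 * Real.pi * r)))⁻¹ := by
    intro k r hr
    obtain ⟨hrI, hrB⟩ := hr
    have hr01 : r ∈ Set.Ioo (0:ℝ) 1 := hIsub k hrI
    have hrpos : 0 < r := hr01.1
    have hcirc : circleL1 Q 0 r = L r * ENNReal.ofReal r := by
      rw [circleL1]
      have h0 : ∀ θ : ℝ, ENNReal.ofReal (Q (0 + r * Complex.exp (θ * Complex.I)) * r)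
          = ENNReal.ofReal (Q ((r:ℂ) * Complex.exp (θ * Complex.I))) * ENNReal.ofReal r := by
        intro θ
        rw [zero_add, ENNReal.ofReal_mul (hQpos _)]
      simp_rw [h0]
      rw [lintegral_mul_const' _ _ ENNReal.ofReal_ne_top]
      congr 1
      exact (setLIntegral_congr MeasureTheory.Ioo_ae_eq_Ioc).symm
    have hdiv2 : circleL1 Q 0 r / ENNReal.ofReal (2 * Real.pi * r)
        = L r / ENNReal.ofReal (2 * Real.pi) := by
      rw [hcirc, ENNReal.ofReal_mul (by positivity : (0:ℝ) ≤ 2 * Real.pi)]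
      exact ENNReal.mul_div_mul_right _ _ (ENNReal.ofReal_pos.2 hrpos).ne' ENNReal.ofReal_ne_top
    have hPr : P r < ENNReal.ofReal (2 * Real.pi * τk k) := by
      have h1 : ¬ (ENNReal.ofReal (2 * Real.pi * τk k) ≤ P r) := hrB
      exact lt_of_not_ge fun hh => h1 hh
    have hLr : L r ≤ ENNReal.ofReal (2 * Real.pi * xk k) :=
      circle_avg_le hΦ0 hΦmono hΦconv ht₁ hlin Q hQm hQpos (hsurj _) (hτkpos k) hPr
    have hmul : ENNReal.ofReal r * (L r / ENNReal.ofReal (2 * Real.pi))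
        ≤ ENNReal.ofReal (1 / 2 ^ (k + 1) * xk k) := by
      have h1 : ENNReal.ofReal r ≤ ENNReal.ofReal (1 / 2 ^ (k + 1)) :=
        ENNReal.ofReal_le_ofReal hrI.2
      have h2 : L r / ENNReal.ofReal (2 * Real.pi) ≤ ENNReal.ofReal (xk k) := by
        refine le_trans (ENNReal.div_le_div_right hLr _) ?_
        rw [← ENNReal.ofReal_div_of_pos (by positivity)]
        apply le_of_eq
        congr 1
        field_simp
      calc ENNReal.ofReal r * (L r / ENNReal.ofReal (2 * Real.pi))
          ≤ ENNReal.ofReal (1 / 2 ^ (k + 1)) * ENNReal.ofReal (xk k) := mul_le_mul' h1 h2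
        _ = ENNReal.ofReal (1 / 2 ^ (k + 1) * xk k) := (ENNReal.ofReal_mul (by positivity)).symm
    rw [hdiv2]
    exact ENNReal.inv_le_inv' hmul
  -- per-piece integral bound
  have hGint : ∀ k, ENNReal.ofReal (1 / (4 * xk k))
      ≤ ∫⁻ r in G k,
        (ENNReal.ofReal r * (circleL1 Q 0 r / ENNReal.ofReal (2 * Real.pi * r)))⁻¹ := by
    intro k
    have hconst := my_setLIntegral_const_le (hGm k)
      (fun r => (ENNReal.ofReal r * (circleL1 Q 0 r / ENNReal.ofReal (2 * Real.pi * r)))⁻¹)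
      ((ENNReal.ofReal (1 / 2 ^ (k + 1) * xk k))⁻¹) (hlow k)
    refine le_trans ?_ hconst
    have hv := hGvol k
    have hA : (0:ℝ) < 1 / 2 ^ (k + 1) * xk k := mul_pos (by positivity) (hxkpos k)
    calc ENNReal.ofReal (1 / (4 * xk k))
        = (ENNReal.ofReal (1 / 2 ^ (k + 1) * xk k))⁻¹ * ENNReal.ofReal (1 / 2 ^ (k + 3)) := by
          rw [← ENNReal.ofReal_inv_of_pos hA, ← ENNReal.ofReal_mul (by positivity)]
          congr 1
          have hx := (hxkpos k).ne'
          have h2k : ((2:ℝ) ^ (k + 1)) ≠ 0 := by positivity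
          field_simp
          ring
      _ ≤ (ENNReal.ofReal (1 / 2 ^ (k + 1) * xk k))⁻¹ * volume (G k) := mul_le_mul_right hv _
  -- disjointness
  have hGdisj : Pairwise (Function.onFun Disjoint G) := by
    have key : ∀ {a b : ℕ}, a < b → Disjoint (I a) (I b) := by
      intro a b hab
      apply Set.Ioc_disjoint_Ioc.2
      have h1 : (1:ℝ) / 2 ^ (b + 1) ≤ 1 / 2 ^ (a + 2) := by
        apply one_div_le_one_div_of_le (by positivity)
        exact pow_le_pow_right₀ (by norm_num) (by omega)
      exact le_trans (min_le_right _ _) (le_trans h1 (le_max_left _ _))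
    intro i j hij
    have hd : Disjoint (I i) (I j) := by
      rcases lt_or_gt_of_ne hij with h | h
      · exact key h
      · exact (key h).symm
    exact hd.mono Set.diff_subset Set.diff_subset
  -- conclusion
  refine top_unique ?_
  calc (⊤ : ℝ≥0∞)
      = ∑' k : ℕ, ENNReal.ofReal (1 / (4 * sInf {t : ℝ | 0 ≤ t ∧ c * 4 ^ k ≤ Φ t})) := hsum.symm
    _ ≤ ∑' k : ℕ, ∫⁻ r in G k,
          (ENNReal.ofReal r * (circleL1 Q 0 r / ENNReal.ofReal (2 * Real.pi * r)))⁻¹ :=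
        ENNReal.tsum_le_tsum (fun k => hGint k)
    _ = ∫⁻ r in ⋃ k, G k,
          (ENNReal.ofReal r * (circleL1 Q 0 r / ENNReal.ofReal (2 * Real.pi * r)))⁻¹ :=
        (lintegral_iUnion hGm hGdisj _).symm
    _ ≤ ∫⁻ r in Set.Ioo (0:ℝ) 1,
          (ENNReal.ofReal r * (circleL1 Q 0 r / ENNReal.ofReal (2 * Real.pi * r)))⁻¹ :=
        lintegral_mono_set (Set.iUnion_subset hGsub)
end
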